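/- arXiv:1409.8335 — 13 statements merged into one kernel-verified Lean document; each statement's English description precedes it below -/
import Mathlib

section
/- The collection WR of subsets of ω×ω generated by vertical lines {i}×ω and by sets G such that for every (i,j),(k,l) ∈ G either i > k+l or k > i+j is an ideal on ω×ω, i.e., it is closed under subsets and finite unions, contains all finite sets, and does not contain the whole set ω×ω. -/
open Set

/-- `I` is an ideal on `α`: closed under subsets and finite unions,
contains all finite sets, and is not all of `P(α)`. -/
def IsIdealOn {α : Type*} (I : Set (Set α)) : Prop :=
  (∀ A ∈ I, ∀ B : Set α, B ⊆ A → B ∈ I) ∧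
  (∀ A ∈ I, ∀ B ∈ I, A ∪ B ∈ I) ∧
  (∀ A : Set α, A.Finite → A ∈ I) ∧
  (Set.univ : Set α) ∉ I

/-- Generator of the first type of `WR`: a vertical line. -/
def WRgen1 (S : Set (ℕ × ℕ)) : Prop := ∃ i, S = {p : ℕ × ℕ | p.1 = i}

/-- Generator of the second type of `WR`. -/
def WRgen2 (S : Set (ℕ × ℕ)) : Prop :=
  ∀ p ∈ S, ∀ q ∈ S, p ≠ q → p.1 > q.1 + q.2 ∨ q.1 > p.1 + p.2

/-- The ideal `WR`: sets covered by finitely many generators. -/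
def WR : Set (Set (ℕ × ℕ)) :=
  {A | ∃ C : Finset (Set (ℕ × ℕ)), (∀ S ∈ C, WRgen1 S ∨ WRgen2 S) ∧ A ⊆ ⋃₀ ↑C}

/-- Generator of `ED↑`: a vertical line or the graph of a nondecreasing function. -/
def EDgen (S : Set (ℕ × ℕ)) : Prop :=
  (∃ i, S = {p : ℕ × ℕ | p.1 = i}) ∨
  (∃ f : ℕ → ℕ, Monotone f ∧ S = {p : ℕ × ℕ | p.2 = f p.1})

/-- The ideal `ED↑`. -/
def EDup : Set (Set (ℕ × ℕ)) :=
  {A | ∃ C : Finset (Set (ℕ × ℕ)), (∀ S ∈ C, EDgen S) ∧ A ⊆ ⋃₀ ↑C}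

/-- A tree of finite sequences: closed under taking prefixes. -/
def IsTree {α : Type*} (T : Set (List α)) : Prop :=
  ∀ s ∈ T, ∀ t : List α, t <+: s → t ∈ T

/-- `I` is weakly Ramsey: every (nonempty) tree all of whose ramifications
belong to the dual filter `I*` has a branch with `I`-positive range. -/
def WeaklyRamsey {α : Type*} (I : Set (Set α)) : Prop :=
  ∀ T : Set (List α), ([] : List α) ∈ T → IsTree T →
    (∀ s ∈ T, {x : α | s ++ [x] ∈ T}ᶜ ∈ I) →
    ∃ b : ℕ → α, (∀ k, (List.range k).map b ∈ T) ∧ Set.range b ∉ I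

/-- `(X n)` is a partition of `α`. -/
def IsPartition {α : Type*} (X : ℕ → Set α) : Prop :=
  (∀ m n, m ≠ n → Disjoint (X m) (X n)) ∧ (⋃ n, X n) = Set.univ

/-- `S` is a selector: it meets each piece in at most one point. -/
def IsSelector {α : Type*} (X : ℕ → Set α) (S : Set α) : Prop :=
  ∀ n, (S ∩ X n).Subsingleton

/-- Locally selective: every partition into sets from `I` has an `I`-positive selector. -/
def LocallySelective {α : Type*} (I : Set (Set α)) : Prop :=
  ∀ X : ℕ → Set α, IsPartition X → (∀ n, X n ∈ I) →
    ∃ S : Set α, IsSelector X S ∧ S ∉ I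

/-- Weakly selective. -/
def WeaklySelective {α : Type*} (I : Set (Set α)) : Prop :=
  ∀ X : ℕ → Set α, IsPartition X → {n | X n ∉ I}.Subsingleton →
    (∀ n, (⋃ m, ⋃ _ : n ≤ m, X m) ∉ I) →
    ∃ S : Set α, IsSelector X S ∧ S ∉ I


theorem WR_isIdeal : IsIdealOn WR := by
  classical
  refine ⟨?_, ?_, ?_, ?_⟩
  · rintro A ⟨C, hC, hAC⟩ B hBA
    exact ⟨C, hC, hBA.trans hAC⟩
  · rintro A ⟨C, hC, hAC⟩ B ⟨D, hD, hBD⟩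
    refine ⟨C ∪ D, ?_, ?_⟩
    · intro S hS
      rcases Finset.mem_union.1 hS with h | h
      · exact hC S h
      · exact hD S h
    · intro p hp
      rcases hp with hp | hp
      · rcases hAC hp with ⟨S, hS, hpS⟩
        exact ⟨S, Finset.mem_coe.2 (Finset.mem_union.2 (Or.inl (Finset.mem_coe.1 hS))), hpS⟩
      · rcases hBD hp with ⟨S, hS, hpS⟩
        exact ⟨S, Finset.mem_coe.2 (Finset.mem_union.2 (Or.inr (Finset.mem_coe.1 hS))), hpS⟩
  · intro A hA
    refine ⟨hA.toFinset.image (fun p => {q : ℕ × ℕ | q.1 = p.1}), ?_, ?_⟩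
    · intro S hS
      rcases Finset.mem_image.1 hS with ⟨p, _, rfl⟩
      exact Or.inl ⟨p.1, rfl⟩
    · intro p hp
      refine ⟨{q : ℕ × ℕ | q.1 = p.1}, ?_, rfl⟩
      simp only [Finset.coe_image, Set.mem_image, Finset.mem_coe, Set.Finite.mem_toFinset]
      exact ⟨p, hp, rfl⟩
  · rintro ⟨C, hC, hAC⟩
    -- g extracts the column of a gen1 set
    set g : Set (ℕ × ℕ) → ℕ := fun S =>
      if h : ∃ i, S = {p : ℕ × ℕ | p.1 = i} then h.choose else 0 with hg
    set i : ℕ := C.sup g + 1 with hi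
    -- h extracts a point of S in column i
    set f : Set (ℕ × ℕ) → ℕ := fun S =>
      if h : ∃ j, (i, j) ∈ S then h.choose else 0 with hf
    set j : ℕ := C.sup f + 1 with hj
    rcases hAC (Set.mem_univ (i, j)) with ⟨S, hSC, hpS⟩
    have hSC' : S ∈ C := by exact_mod_cast hSC
    rcases hC S hSC' with h1 | h2
    · rcases h1 with ⟨k, rfl⟩
      have hik : i = k := hpS
      have hgk : g {p : ℕ × ℕ | p.1 = k} = k := by
        have hex : ∃ m, {p : ℕ × ℕ | p.1 = k} = {p : ℕ × ℕ | p.1 = m} := ⟨k, rfl⟩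
        have hspec := hex.choose_spec
        have h0 : ((k, 0) : ℕ × ℕ) ∈ {p : ℕ × ℕ | p.1 = k} := rfl
        rw [hspec] at h0
        have hk : k = hex.choose := h0
        simp only [hg, dif_pos hex, ← hk]
      have hle := Finset.le_sup (f := g) hSC'
      rw [hgk] at hle
      omega
    · have hex : ∃ l, (i, l) ∈ S := ⟨j, hpS⟩
      have hfS : (i, f S) ∈ S := by
        rw [hf]; simp only [dif_pos hex]; exact hex.choose_spec
      have hle : f S ≤ C.sup f := Finset.le_sup hSC'
      have hne : ((i, j) : ℕ × ℕ) ≠ (i, f S) := by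
        intro h
        have : j = f S := congrArg Prod.snd h
        omega
      rcases h2 _ hpS _ hfS hne with h | h <;> simp at h <;> omega
end

section
/- The ideal WR is a Σ⁰₂ (Fσ) subset of P(ω×ω) ≅ 2^(ω×ω): namely WR = {A : φ(A) < ∞} for the lower semicontinuous submeasure φ(A) = inf{|C| : A ⊆ ∪C and each member of C is a generator of the first or second type of WR}. -/
open Set

/-- The covering-number submeasure for `WR`. -/
noncomputable def phi (A : Set (ℕ × ℕ)) : ℕ∞ :=
  sInf {m : ℕ∞ | ∃ C : Finset (Set (ℕ × ℕ)),
    (∀ S ∈ C, WRgen1 S ∨ WRgen2 S) ∧ A ⊆ ⋃₀ ↑C ∧ m = (C.card : ℕ∞)}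


lemma phi_le_card {A : Set (ℕ × ℕ)} {C : Finset (Set (ℕ × ℕ))}
    (hC : ∀ S ∈ C, WRgen1 S ∨ WRgen2 S) (hcov : A ⊆ ⋃₀ ↑C) :
    phi A ≤ (C.card : ℕ∞) :=
  sInf_le ⟨C, hC, hcov, rfl⟩

lemma phi_mono {A B : Set (ℕ × ℕ)} (h : A ⊆ B) : phi A ≤ phi B := by
  apply le_sInf
  rintro m ⟨C, hC, hcov, rfl⟩
  exact phi_le_card hC (h.trans hcov)

lemma phi_exists {A : Set (ℕ × ℕ)} (h : phi A ≠ ⊤) :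
    ∃ C : Finset (Set (ℕ × ℕ)), (∀ S ∈ C, WRgen1 S ∨ WRgen2 S) ∧ A ⊆ ⋃₀ ↑C ∧
      phi A = (C.card : ℕ∞) := by
  have hne : {m : ℕ∞ | ∃ C : Finset (Set (ℕ × ℕ)),
      (∀ S ∈ C, WRgen1 S ∨ WRgen2 S) ∧ A ⊆ ⋃₀ ↑C ∧ m = (C.card : ℕ∞)}.Nonempty := by
    by_contra hemp
    rw [Set.not_nonempty_iff_eq_empty] at hemp
    apply h
    simp [phi, hemp]
  exact csInf_mem hne

lemma phi_empty : phi (∅ : Set (ℕ × ℕ)) = 0 := by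
  refine le_antisymm ?_ zero_le
  have := phi_le_card (A := ∅) (C := (∅ : Finset (Set (ℕ × ℕ)))) (by simp) (by simp)
  simpa using this

lemma phi_union_le (A B : Set (ℕ × ℕ)) : phi (A ∪ B) ≤ phi A + phi B := by
  classical
  rcases eq_or_ne (phi A) ⊤ with hA | hA
  · simp [hA]
  rcases eq_or_ne (phi B) ⊤ with hB | hB
  · simp [hB]
  obtain ⟨C, hC, hCcov, hCcard⟩ := phi_exists hA
  obtain ⟨D, hD, hDcov, hDcard⟩ := phi_exists hB
  have h1 : phi (A ∪ B) ≤ ((C ∪ D).card : ℕ∞) := by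
    refine phi_le_card ?_ ?_
    · intro S hS
      rcases Finset.mem_union.1 hS with h | h
      · exact hC S h
      · exact hD S h
    · rw [Finset.coe_union]
      exact union_subset (hCcov.trans (sUnion_subset_sUnion subset_union_left))
        (hDcov.trans (sUnion_subset_sUnion subset_union_right))
  refine h1.trans ?_
  rw [hCcard, hDcard, ← Nat.cast_add]
  exact Nat.cast_le.2 (Finset.card_union_le C D)

def gset : Set ((ℕ × ℕ) → Bool) :=
  {g | (∃ i, ∀ p : ℕ × ℕ, g p = true ↔ p.1 = i) ∨ WRgen2 {p | g p = true}}

lemma gset_gen {g : (ℕ × ℕ) → Bool} (hg : g ∈ gset) :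
    WRgen1 {p | g p = true} ∨ WRgen2 {p | g p = true} := by
  rcases hg with ⟨i, hi⟩ | h
  · exact Or.inl ⟨i, Set.ext fun p => hi p⟩
  · exact Or.inr h

lemma eval_closed (p : ℕ × ℕ) (b : Bool) : IsClosed {g : (ℕ × ℕ) → Bool | g p = b} := by
  have : {g : (ℕ × ℕ) → Bool | g p = b} = (fun g : (ℕ × ℕ) → Bool => g p) ⁻¹' {b} := rfl
  rw [this]
  exact (isClosed_discrete _).preimage (continuous_apply p)

lemma eval_open (p : ℕ × ℕ) (b : Bool) : IsOpen {g : (ℕ × ℕ) → Bool | g p = b} := by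
  have : {g : (ℕ × ℕ) → Bool | g p = b} = (fun g : (ℕ × ℕ) → Bool => g p) ⁻¹' {b} := rfl
  rw [this]
  exact (isOpen_discrete _).preimage (continuous_apply p)

lemma gset_closed : IsClosed gset := by
  rw [← isOpen_compl_iff, isOpen_iff_mem_nhds]
  intro g hg
  have hg1 : ¬ (∃ i, ∀ p : ℕ × ℕ, g p = true ↔ p.1 = i) := fun h => hg (Or.inl h)
  have hg2 : ¬ WRgen2 {p | g p = true} := fun h => hg (Or.inr h)
  -- extract violating pair
  unfold WRgen2 at hg2
  push_neg at hg2
  obtain ⟨p, hp, q, hq, hpq, hc1, hc2⟩ := hg2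
  simp only [Set.mem_setOf_eq] at hp hq
  -- two cases for failure of gen1
  have hcase : (∃ r : ℕ × ℕ, g r = true ∧ r.1 ≠ p.1) ∨
      (∃ s : ℕ × ℕ, s.1 = p.1 ∧ g s = false) := by
    by_contra hco
    push_neg at hco
    obtain ⟨h1, h2⟩ := hco
    apply hg1
    exact ⟨p.1, fun r => ⟨fun hr => h1 r hr, fun hr => by simpa using h2 r hr⟩⟩
  rcases hcase with ⟨r, hr, hrp⟩ | ⟨s, hs, hsf⟩
  · refine Filter.mem_of_superset (IsOpen.mem_nhds
      (((eval_open p true).inter (eval_open q true)).inter (eval_open r true))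
      ⟨⟨hp, hq⟩, hr⟩) ?_
    rintro h ⟨⟨hhp, hhq⟩, hhr⟩
    rintro (⟨i, hi⟩ | h2)
    · exact hrp (((hi r).1 hhr).trans ((hi p).1 hhp).symm)
    · rcases h2 p hhp q hhq hpq with hlt | hlt
      · exact absurd hlt (not_lt.2 hc1)
      · exact absurd hlt (not_lt.2 hc2)
  · refine Filter.mem_of_superset (IsOpen.mem_nhds
      (((eval_open p true).inter (eval_open q true)).inter (eval_open s false))
      ⟨⟨hp, hq⟩, hsf⟩) ?_
    rintro h ⟨⟨hhp, hhq⟩, hhs⟩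
    rintro (⟨i, hi⟩ | h2)
    · have : s.1 = i := hs.trans ((hi p).1 hhp)
      have := (hi s).2 this
      rw [hhs] at this
      exact Bool.false_ne_true this
    · rcases h2 p hhp q hhq hpq with hlt | hlt
      · exact absurd hlt (not_lt.2 hc1)
      · exact absurd hlt (not_lt.2 hc2)

open Classical in
noncomputable def chi (S : Set (ℕ × ℕ)) : (ℕ × ℕ) → Bool :=
  fun p => if p ∈ S then true else false

lemma chi_mem {S : Set (ℕ × ℕ)} {p : ℕ × ℕ} : chi S p = true ↔ p ∈ S := by
  classical
  by_cases h : p ∈ S <;> simp [chi, h]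

lemma chi_setOf (S : Set (ℕ × ℕ)) : {p | chi S p = true} = S :=
  Set.ext fun _ => chi_mem

lemma chi_gset {S : Set (ℕ × ℕ)} (h : WRgen1 S ∨ WRgen2 S) : chi S ∈ gset := by
  rcases h with ⟨i, rfl⟩ | h
  · exact Or.inl ⟨i, fun p => by rw [chi_mem]; rfl⟩
  · exact Or.inr (by rw [chi_setOf]; exact h)

lemma false_gset : (fun _ : ℕ × ℕ => false) ∈ gset := by
  refine Or.inr ?_
  intro p hp
  simp at hp

lemma key (A : Set (ℕ × ℕ)) (m : ℕ)
    (h : ∀ F : Finset (ℕ × ℕ), phi (A ∩ ↑F) ≤ (m : ℕ∞)) : phi A ≤ (m : ℕ∞) := by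
  classical
  set Z : Finset (ℕ × ℕ) → Set (Fin m → ((ℕ × ℕ) → Bool)) := fun F =>
    {f | (∀ k, f k ∈ gset) ∧ ∀ p ∈ A ∩ ↑F, ∃ k, f k p = true} with hZ
  have hZclosed : ∀ F, IsClosed (Z F) := by
    intro F
    have : Z F = (⋂ k, (fun f : Fin m → ((ℕ × ℕ) → Bool) => f k) ⁻¹' gset) ∩
        ⋂ p ∈ A ∩ (↑F : Set (ℕ × ℕ)), ⋃ k : Fin m,
          {f : Fin m → ((ℕ × ℕ) → Bool) | f k p = true} := by
      ext f
      simp [hZ, Set.mem_iInter]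
    rw [this]
    refine IsClosed.inter (isClosed_iInter fun k => gset_closed.preimage (continuous_apply k)) ?_
    refine isClosed_biInter fun p _ => isClosed_iUnion_of_finite fun k => ?_
    have : {f : Fin m → ((ℕ × ℕ) → Bool) | f k p = true} =
        (fun f : Fin m → ((ℕ × ℕ) → Bool) => f k) ⁻¹' {g | g p = true} := rfl
    rw [this]
    exact (eval_closed p true).preimage (continuous_apply k)
  have hZne : ∀ F, (Z F).Nonempty := by
    intro F
    have hfin : phi (A ∩ ↑F) ≠ ⊤ := fun ht => by
      have := h F; rw [ht] at this; exact absurd this (by simp)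
    obtain ⟨C, hC, hcov, hcard⟩ := phi_exists hfin
    have hclem : C.toList.length ≤ m := by
      have := (h F); rw [hcard] at this
      simpa [Finset.length_toList] using this
    refine ⟨fun k => if hk : (k : ℕ) < C.toList.length then chi (C.toList.get ⟨k, hk⟩)
      else fun _ => false, ?_, ?_⟩
    · intro k
      by_cases hk : (k : ℕ) < C.toList.length
      · dsimp only; rw [dif_pos hk]
        exact chi_gset (hC _ (by rw [← Finset.mem_toList]; exact List.get_mem _ _))
      · dsimp only; rw [dif_neg hk]; exact false_gset
    · intro p hp
      obtain ⟨S, hSC, hpS⟩ := hcov hp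
      obtain ⟨j, hj⟩ := List.mem_iff_get.1 (Finset.mem_toList.2 hSC)
      refine ⟨⟨j, lt_of_lt_of_le j.2 hclem⟩, ?_⟩
      have hjm : ((⟨(j : ℕ), lt_of_lt_of_le j.2 hclem⟩ : Fin m) : ℕ) < C.toList.length := j.2
      dsimp only; rw [dif_pos hjm]
      have : C.toList.get ⟨(j : ℕ), hjm⟩ = S := by
        convert hj
      rw [this]
      exact chi_mem.2 hpS
  have hdir : Directed (fun x1 x2 : Set (Fin m → ((ℕ × ℕ) → Bool)) => x1 ⊇ x2) Z := by
    intro F G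
    refine ⟨F ∪ G, ?_, ?_⟩ <;>
    · rintro f ⟨hf1, hf2⟩
      refine ⟨hf1, fun p hp => hf2 p ⟨hp.1, ?_⟩⟩
      simp at hp ⊢
      tauto
  obtain ⟨f, hf⟩ := IsCompact.nonempty_iInter_of_directed_nonempty_isCompact_isClosed Z hdir
    hZne (fun F => (hZclosed F).isCompact) hZclosed
  simp only [Set.mem_iInter] at hf
  set C : Finset (Set (ℕ × ℕ)) := Finset.image (fun k => {p | f k p = true}) Finset.univ with hCdef
  have h1 : ∀ S ∈ C, WRgen1 S ∨ WRgen2 S := by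
    intro S hS
    simp [hCdef] at hS
    obtain ⟨k, rfl⟩ := hS
    exact gset_gen ((hf ∅).1 k)
  have h2 : A ⊆ ⋃₀ ↑C := by
    intro a ha
    obtain ⟨k, hk⟩ := (hf {a}).2 a ⟨ha, by simp⟩
    exact ⟨{p | f k p = true}, by simp [hCdef], hk⟩
  refine (phi_le_card h1 h2).trans ?_
  have : C.card ≤ m := le_trans Finset.card_image_le (by simp)
  exact_mod_cast this

lemma phi_iSup (e : ℕ ≃ (ℕ × ℕ)) (A : Set (ℕ × ℕ)) :
    (⨆ n, phi (A ∩ (e '' Set.Iic n))) = phi A := by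
  refine le_antisymm (iSup_le fun n => phi_mono inter_subset_left) ?_
  cases hs : (⨆ n, phi (A ∩ (e '' Set.Iic n))) with
  | top => exact le_top
  | coe m =>
    refine key A m ?_
    intro F
    set n : ℕ := F.sup (fun p => e.symm p) with hn
    have hsub : A ∩ ↑F ⊆ A ∩ (e '' Set.Iic n) := by
      rintro p ⟨hpA, hpF⟩
      refine ⟨hpA, e.symm p, ?_, by simp⟩
      exact Finset.le_sup (f := fun p => e.symm p) hpF
    calc phi (A ∩ ↑F) ≤ phi (A ∩ (e '' Set.Iic n)) := phi_mono hsub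
    _ ≤ ⨆ n, phi (A ∩ (e '' Set.Iic n)) := le_iSup (fun n => phi (A ∩ (e '' Set.Iic n))) n
    _ = (m : ℕ∞) := hs

lemma phi_tendsto (e : ℕ ≃ (ℕ × ℕ)) (A : Set (ℕ × ℕ)) :
    Filter.Tendsto (fun n => phi (A ∩ (e '' Set.Iic n))) Filter.atTop (nhds (phi A)) := by
  have hmono : Monotone (fun n => phi (A ∩ (e '' Set.Iic n))) := by
    intro a b hab
    exact phi_mono (inter_subset_inter_right _ (Set.image_mono (Set.Iic_subset_Iic.2 hab)))
  have := tendsto_atTop_iSup hmono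
  rwa [phi_iSup e A] at this

lemma WR_eq : WR = {A | phi A < ⊤} := by
  ext A
  constructor
  · rintro ⟨C, hC, hcov⟩
    exact lt_of_le_of_lt (phi_le_card hC hcov) (by simp [lt_top_iff_ne_top])
  · intro hA
    obtain ⟨C, hC, hcov, _⟩ := phi_exists (ne_of_lt hA)
    exact ⟨C, hC, hcov⟩


theorem WR_sigma02 :
    phi ∅ = 0 ∧
    (∀ A B : Set (ℕ × ℕ), phi A ≤ phi (A ∪ B) ∧ phi (A ∪ B) ≤ phi A + phi B) ∧
    (∀ (e : ℕ ≃ (ℕ × ℕ)) (A : Set (ℕ × ℕ)),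
      Filter.Tendsto (fun n => phi (A ∩ (e '' Set.Iic n))) Filter.atTop (nhds (phi A))) ∧
    WR = {A | phi A < ⊤} ∧
    (∃ F : ℕ → Set ((ℕ × ℕ) → Bool), (∀ n, IsClosed (F n)) ∧
      {f : (ℕ × ℕ) → Bool | {p | f p = true} ∈ WR} = ⋃ n, F n) := by
  refine ⟨phi_empty, fun A B => ⟨phi_mono subset_union_left, phi_union_le A B⟩,
    phi_tendsto, WR_eq, ?_⟩
  refine ⟨fun n => ⋂ Fn : Finset (ℕ × ℕ),
    {f : (ℕ × ℕ) → Bool | phi ({p | f p = true} ∩ ↑Fn) ≤ (n : ℕ∞)}, ?_, ?_⟩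
  · intro n
    refine isClosed_iInter fun Fn => ?_
    rw [← isOpen_compl_iff, isOpen_iff_mem_nhds]
    intro f hf
    simp only [Set.mem_compl_iff, Set.mem_setOf_eq, not_le] at hf
    refine Filter.mem_of_superset (IsOpen.mem_nhds
      (isOpen_biInter_finset (s := Fn) (f := fun p => {h : (ℕ × ℕ) → Bool | h p = f p})
        (fun p _ => eval_open p (f p))) (Set.mem_iInter₂.2 fun p _ => rfl)) ?_
    intro h hh
    simp only [Set.mem_iInter, Set.mem_setOf_eq] at hh
    simp only [Set.mem_compl_iff, Set.mem_setOf_eq, not_le]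
    have : {p | h p = true} ∩ ↑Fn = {p | f p = true} ∩ ↑Fn := by
      ext p
      simp only [Set.mem_inter_iff, Set.mem_setOf_eq, Finset.mem_coe, and_congr_left_iff]
      intro hp
      rw [hh p hp]
    rwa [this]
  · ext f
    simp only [Set.mem_setOf_eq, Set.mem_iUnion, Set.mem_iInter]
    constructor
    · intro hw
      rw [WR_eq] at hw
      obtain ⟨C, hC, hcov, hcard⟩ := phi_exists (ne_of_lt hw)
      refine ⟨C.card, fun Fn => ?_⟩
      rw [← hcard]
      exact phi_mono inter_subset_left
    · rintro ⟨n, hn⟩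
      rw [WR_eq]
      exact lt_of_le_of_lt (key _ n hn) (by simp [lt_top_iff_ne_top])
end

section
/- If points a₀,...,a_k ∈ ω×ω satisfy proj₁(a_i) < proj₁(a_j) for all i < j ≤ k and proj₁(a_i)+proj₂(a_i) > proj₁(a_k) for all i ≤ k, then {a₀,...,a_k} cannot be covered by k many generators of the second type of the ideal WR. -/
open Set

theorem WR_no_small_cover (k : ℕ) (a : Fin (k + 1) → ℕ × ℕ)
    (h1 : ∀ i j : Fin (k + 1), i < j → (a i).1 < (a j).1)
    (h2 : ∀ i : Fin (k + 1), (a i).1 + (a i).2 > (a (Fin.last k)).1) :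
    ¬ ∃ C : Finset (Set (ℕ × ℕ)), C.card ≤ k ∧ (∀ S ∈ C, WRgen2 S) ∧
      Set.range a ⊆ ⋃₀ ↑C := by
  rintro ⟨C, hcard, hgen, hcov⟩
  -- choose for each i a set in C containing a i
  have hch : ∀ i : Fin (k + 1), ∃ S ∈ C, a i ∈ S := by
    intro i
    obtain ⟨S, hS, haS⟩ := hcov ⟨i, rfl⟩
    exact ⟨S, hS, haS⟩
  choose f hfC hfa using hch
  have hlt : Fintype.card {S // S ∈ C} < Fintype.card (Fin (k + 1)) := by
    simp [Fintype.card_coe]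
    omega
  obtain ⟨i, j, hij, hfeq⟩ :=
    Fintype.exists_ne_map_eq_of_card_lt (fun i => (⟨f i, hfC i⟩ : {S // S ∈ C})) hlt
  have hfeq' : f i = f j := congrArg Subtype.val hfeq
  wlog hlt2 : i < j generalizing i j
  · exact this j i hij.symm hfeq.symm hfeq'.symm (by omega)
  have hne : a i ≠ a j := fun h => absurd (congrArg Prod.fst h) (Nat.ne_of_lt (h1 i j hlt2))
  have hgen2 := hgen (f i) (hfC i)
  rcases hgen2 (a i) (hfa i) (a j) (hfeq' ▸ hfa j) hne with h | h
  · have := h1 i j hlt2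
    omega
  · have hjl : (a j).1 ≤ (a (Fin.last k)).1 := by
      rcases eq_or_lt_of_le (Fin.le_last j) with hj | hj
      · rw [hj]
      · exact le_of_lt (h1 j (Fin.last k) hj)
    have := h2 i
    omega
end

section
/- Every ideal on ω isomorphic to the ideal WR has property Mon: for every sequence of reals (x_n)_{n∈ω} there exists a set M not in the ideal such that (x_n)_{n∈M} is monotone. -/
open Set

section AuxWR

variable {σ : Type*}

private lemma exists_seq_rec' (Q : ℕ → σ → Prop) (R : ℕ → σ → σ → Prop)
    (h0 : ∃ s, Q 0 s) (hs : ∀ k s, Q k s → ∃ t, Q (k + 1) t ∧ R k s t) :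
    ∃ f : ℕ → σ, (∀ k, Q k (f k)) ∧ ∀ k, R k (f k) (f (k + 1)) := by
  choose g hg1 hg2 using hs
  obtain ⟨s0, hs0⟩ := h0
  let F : (k : ℕ) → {s : σ // Q k s} := fun k =>
    Nat.rec ⟨s0, hs0⟩ (fun k p => ⟨g k p.1 p.2, hg1 k p.1 p.2⟩) k
  exact ⟨fun k => (F k).1, fun k => (F k).2, fun k => hg2 k (F k).1 (F k).2⟩

private lemma infinite_exists_gt {S : Set ℕ} (hS : S.Infinite) (a : ℕ) : ∃ b ∈ S, a < b := by
  by_contra h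
  push_neg at h
  exact hS ((Set.finite_Iic a).subset h)

private lemma exists_strictMono_into {S : Set ℕ} (hS : S.Infinite) :
    ∃ ψ : ℕ → ℕ, StrictMono ψ ∧ ∀ k, ψ k ∈ S := by
  obtain ⟨f, hf1, hf2⟩ := exists_seq_rec' (fun _ m => m ∈ S) (fun _ a b => a < b)
    hS.nonempty (fun k s _ => by
      obtain ⟨b, hb, hab⟩ := infinite_exists_gt hS s
      exact ⟨b, hb, hab⟩)
  exact ⟨f, strictMono_nat_of_lt_succ hf2, hf1⟩

private lemma exists_mono_subseq (f : ℕ → ℝ) :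
    ∃ g : ℕ → ℕ, StrictMono g ∧ (Monotone (f ∘ g) ∨ StrictAnti (f ∘ g)) := by
  obtain ⟨g, hg | hg⟩ := exists_increasing_or_nonincreasing_subseq (LE.le (α := ℝ)) f
  · refine ⟨g, g.strictMono, Or.inl (monotone_nat_of_le_succ fun n => ?_)⟩
    exact hg n (n + 1) (Nat.lt_succ_self n)
  · refine ⟨g, g.strictMono, Or.inr (strictAnti_nat_of_succ_lt fun n => ?_)⟩
    exact lt_of_not_ge (hg n (n + 1) (Nat.lt_succ_self n))

private lemma exists_monoOn_subset (x : ℕ → ℝ) (S : Set ℕ) (hS : S.Infinite) :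
    ∃ T : Set ℕ, T ⊆ S ∧ T.Infinite ∧ (MonotoneOn x T ∨ AntitoneOn x T) := by
  obtain ⟨ψ, hψ, hψS⟩ := exists_strictMono_into hS
  obtain ⟨g, hg, hcase⟩ := exists_mono_subseq (x ∘ ψ)
  have hinj : StrictMono (ψ ∘ g) := hψ.comp hg
  refine ⟨Set.range (ψ ∘ g), ?_, Set.infinite_range_of_injective hinj.injective, ?_⟩
  · rintro _ ⟨u, rfl⟩; exact hψS (g u)
  · rcases hcase with hc | hc
    · left
      rintro _ ⟨u, rfl⟩ _ ⟨v, rfl⟩ hab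
      exact hc (hinj.le_iff_le.mp hab)
    · right
      rintro _ ⟨u, rfl⟩ _ ⟨v, rfl⟩ hab
      exact (hc.antitone) (hinj.le_iff_le.mp hab)

private lemma trichotomyR (L : ℕ → ℝ) :
    (∃ ψ : ℕ → ℕ, StrictMono ψ ∧ StrictMono (L ∘ ψ)) ∨
    (∃ ψ : ℕ → ℕ, StrictMono ψ ∧ StrictAnti (L ∘ ψ)) ∨
    (∃ ψ : ℕ → ℕ, StrictMono ψ ∧ ∀ u, L (ψ u) = L (ψ 0)) := by
  obtain ⟨φ, hφ, hmono | hanti⟩ := exists_mono_subseq L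
  · by_cases hc : ∃ k, ∀ l, k ≤ l → L (φ l) = L (φ k)
    · obtain ⟨k, hk⟩ := hc
      right; right
      refine ⟨fun u => φ (k + u), hφ.comp fun a b h => by omega, fun u => ?_⟩
      rw [hk (k + u) (by omega), hk (k + 0) (by omega)]
    · push_neg at hc
      left
      obtain ⟨f, -, hf2⟩ := exists_seq_rec' (fun _ _ => True)
        (fun _ a b => a < b ∧ L (φ a) < L (φ b)) ⟨0, trivial⟩ (fun k a _ => by
          obtain ⟨l, hl, hne⟩ := hc a
          refine ⟨l, trivial, ?_, lt_of_le_of_ne (hmono hl) (Ne.symm hne)⟩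
          rcases lt_or_eq_of_le hl with h | h
          · exact h
          · exact absurd (h ▸ rfl) hne)
      refine ⟨φ ∘ f, hφ.comp (strictMono_nat_of_lt_succ fun k => (hf2 k).1),
        strictMono_nat_of_lt_succ fun k => (hf2 k).2⟩
  · right; left
    exact ⟨φ, hφ, hanti⟩

private lemma tail_infinite {x : ℕ → ℝ} {C : Set ℕ} (hC : C.Infinite) (hm : MonotoneOn x C)
    {n₀ : ℕ} (hn₀ : n₀ ∈ C) {w : ℝ} (hw : w ≤ x n₀) (N : ℕ) :
    {n | n ∈ C ∧ N < n ∧ w ≤ x n}.Infinite := by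
  refine Set.Infinite.mono ?_ (hC.diff (Set.finite_Iic (max n₀ N)))
  rintro n ⟨hn, hn2⟩
  simp only [Set.mem_Iic, not_le, max_lt_iff] at hn2
  exact ⟨hn, hn2.2, hw.trans (hm hn₀ hn hn2.1.le)⟩

end AuxWR
section AuxWR2

private lemma cover_card (B : Finset (ℕ × ℕ)) (C : Finset (Set (ℕ × ℕ)))
    (hcov : ∀ p ∈ B, ∃ S ∈ C, p ∈ S)
    (h1 : ∀ S ∈ C, ∀ p ∈ B, ∀ q ∈ B, p ∈ S → q ∈ S → p = q) :
    B.card ≤ C.card := by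
  classical
  by_contra hlt
  push_neg at hlt
  let f : ℕ × ℕ → Set (ℕ × ℕ) := fun p => if h : ∃ S ∈ C, p ∈ S then h.choose else ∅
  have hf : ∀ p ∈ B, f p ∈ C ∧ p ∈ f p := by
    intro p hp
    have h := hcov p hp
    simp only [f, dif_pos h]
    exact ⟨h.choose_spec.1, h.choose_spec.2⟩
  obtain ⟨p, hp, q, hq, hne, heq⟩ :=
    Finset.exists_ne_map_eq_of_card_lt_of_maps_to hlt (fun p hp => (hf p hp).1)
  exact hne (h1 (f p) (hf p hp).1 p hp q hq (hf p hp).2 (heq ▸ (hf q hq).2))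

private lemma mem_cover {M : Set ℕ} {e : ℕ ≃ (ℕ × ℕ)} {C : Finset (Set (ℕ × ℕ))}
    (hcov : e '' M ⊆ ⋃₀ ↑C) {n : ℕ} (hn : n ∈ M) : ∃ S ∈ C, e n ∈ S := by
  have := hcov ⟨n, hn, rfl⟩
  obtain ⟨S, hS, hmem⟩ := Set.mem_sUnion.mp this
  exact ⟨S, hS, hmem⟩

private lemma pos3 (e : ℕ ≃ (ℕ × ℕ)) (M : Set ℕ) (j : ℕ → ℕ) (hj : Function.Injective j)
    (S : ℕ → Finset ℕ) (hSM : ∀ k, ↑(S k) ⊆ M) (hcard : ∀ k, k + 1 ≤ (S k).card)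
    (hcol : ∀ k, ∀ n ∈ S k, (e n).1 = j k) : e '' M ∉ WR := by
  classical
  rintro ⟨C, hgen, hcov⟩
  -- the set of indices of vertical lines in C is finite
  have hD : ((fun i => {p : ℕ × ℕ | p.1 = i}) ⁻¹' (↑C : Set (Set (ℕ × ℕ)))).Finite := by
    refine Set.Finite.preimage ?_ C.finite_toSet
    intro a _ b _ hab
    simpa using (Set.ext_iff.mp hab (a, 0)).mp rfl
  have hjD : (j ⁻¹' ((fun i => {p : ℕ × ℕ | p.1 = i}) ⁻¹' (↑C : Set (Set (ℕ × ℕ))))).Finite :=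
    Set.Finite.preimage hj.injOn hD
  obtain ⟨k, hk⟩ := ((hjD.union (Set.finite_Iio C.card)).infinite_compl).nonempty
  simp only [Set.mem_compl_iff, Set.mem_union, Set.mem_preimage, Set.mem_Iio, not_or, not_lt] at hk
  obtain ⟨hkD, hkc⟩ := hk
  -- the block
  set B : Finset (ℕ × ℕ) := (S k).image (fun n => e n) with hB
  have hBcard : C.card + 1 ≤ B.card := by
    rw [hB, Finset.card_image_of_injective _ e.injective]
    have := hcard k
    omega
  have hle := cover_card B C (fun p hp => by
      rw [hB] at hp
      obtain ⟨n, hn, rfl⟩ := Finset.mem_image.mp hp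
      exact mem_cover hcov (hSM k hn))
    (by
      intro T hT p hp q hq hpT hqT
      obtain ⟨np, hnp, rfl⟩ := Finset.mem_image.mp hp
      obtain ⟨nq, hnq, rfl⟩ := Finset.mem_image.mp hq
      rcases hgen T hT with ⟨i, rfl⟩ | h2
      · exfalso
        have h1 : (e np).1 = i := hpT
        have hji : j k = i := by rw [← hcol k np hnp, h1]
        exact hkD (Finset.mem_coe.mpr (by rw [hji]; exact hT))
      · by_contra hne
        have e1 : (e np).1 = j k := hcol k np hnp
        have e2 : (e nq).1 = j k := hcol k nq hnq
        rcases h2 _ hpT _ hqT hne with h | h <;> omega)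
  omega

private lemma pos2 (e : ℕ ≃ (ℕ × ℕ)) (M : Set ℕ) (n : ℕ → ℕ) (hnM : ∀ k, n k ∈ M)
    (hcolinj : Function.Injective fun k => (e (n k)).1)
    (hh : ∀ l t, t ≤ 2 * l → (e (n t)).1 ≤ (e (n l)).2) : e '' M ∉ WR := by
  classical
  rintro ⟨C, hgen, hcov⟩
  set c := C.card with hc
  set K : Finset ℕ := Finset.Icc (c + 1) (2 * c + 1) with hK
  have hKcard : K.card = c + 1 := by rw [hK, Nat.card_Icc]; omega
  set B : Finset (ℕ × ℕ) := K.image (fun k => e (n k)) with hB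
  have hBcard : B.card = c + 1 := by
    rw [hB, Finset.card_image_of_injective, hKcard]
    intro a b hab
    exact hcolinj (congrArg Prod.fst hab)
  have hle := cover_card B C (fun p hp => by
      rw [hB] at hp
      obtain ⟨k, hk, rfl⟩ := Finset.mem_image.mp hp
      exact mem_cover hcov (hnM k))
    (by
      intro T hT p hp q hq hpT hqT
      obtain ⟨a, ha, rfl⟩ := Finset.mem_image.mp hp
      obtain ⟨b, hb, rfl⟩ := Finset.mem_image.mp hq
      rw [hK, Finset.mem_Icc] at ha hb
      rcases hgen T hT with ⟨i, rfl⟩ | hG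
      · have h1 : (e (n a)).1 = i := hpT
        have h2 : (e (n b)).1 = i := hqT
        have hab : a = b := hcolinj (h1.trans h2.symm)
        rw [hab]
      · by_contra hne
        have h1 : (e (n a)).1 ≤ (e (n b)).2 := hh b a (by omega)
        have h2 : (e (n b)).1 ≤ (e (n a)).2 := hh a b (by omega)
        rcases hG _ hpT _ hqT hne with h | h <;> omega)
  omega

end AuxWR2
section AuxWR3

private lemma chunks (x : ℕ → ℝ) (C : ℕ → Set ℕ) (hmono : ∀ k, MonotoneOn x (C k))
    (P : ℕ → ℝ → Prop) (w0 : ℝ) (h0 : P 0 w0)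
    (hinf : ∀ k w, P k w → ∀ N, {n | n ∈ C k ∧ N < n ∧ w ≤ x n}.Infinite)
    (hnext : ∀ k w, P k w → ∀ n ∈ C k, w ≤ x n → P (k + 1) (x n)) :
    ∃ S : ℕ → Finset ℕ, (∀ k, ↑(S k) ⊆ C k) ∧ (∀ k, (S k).card = k + 1) ∧
      MonotoneOn x (⋃ k, ↑(S k)) := by
  classical
  -- state: (chunk, upper value bound, upper index bound)
  set Q : ℕ → Finset ℕ × ℝ × ℕ → Prop := fun k s =>
    ↑s.1 ⊆ C k ∧ s.1.card = k + 1 ∧ (∀ n ∈ s.1, x n ≤ s.2.1 ∧ n ≤ s.2.2) ∧ P (k + 1) s.2.1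
    with hQ
  set R : ℕ → Finset ℕ × ℝ × ℕ → Finset ℕ × ℝ × ℕ → Prop := fun _ s t =>
    ∀ n ∈ t.1, s.2.2 < n ∧ s.2.1 ≤ x n with hR
  have hstep : ∀ (k : ℕ) (w : ℝ) (N : ℕ), P k w →
      ∃ t : Finset ℕ × ℝ × ℕ, ↑t.1 ⊆ C k ∧ t.1.card = k + 1 ∧
        (∀ n ∈ t.1, x n ≤ t.2.1 ∧ n ≤ t.2.2) ∧ P (k + 1) t.2.1 ∧
        (∀ n ∈ t.1, N < n ∧ w ≤ x n) := by
    intro k w N hP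
    obtain ⟨F, hFsub, hFcard⟩ := (hinf k w hP N).exists_subset_card_eq (k + 1)
    have hFne : F.Nonempty := Finset.card_pos.mp (by omega)
    obtain ⟨b, hb, hbmax⟩ := F.exists_max_image x hFne
    obtain ⟨m, hm, hmmax⟩ := F.exists_max_image id hFne
    have hbC : b ∈ C k := (hFsub hb).1
    have hbw : w ≤ x b := (hFsub hb).2.2
    refine ⟨⟨F, x b, m⟩, fun n hn => (hFsub hn).1, hFcard,
      fun n hn => ⟨hbmax n hn, hmmax n hn⟩, hnext k w hP b hbC hbw,
      fun n hn => ⟨(hFsub hn).2.1, (hFsub hn).2.2⟩⟩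
  obtain ⟨f, hf1, hf2⟩ := exists_seq_rec' Q R
    (by
      obtain ⟨t, h1, h2, h3, h4, _⟩ := hstep 0 w0 0 h0
      exact ⟨t, h1, h2, h3, h4⟩)
    (by
      intro k s hQs
      obtain ⟨t, h1, h2, h3, h4, h5⟩ := hstep (k + 1) s.2.1 s.2.2 hQs.2.2.2
      exact ⟨t, ⟨h1, h2, h3, h4⟩, h5⟩)
  set S : ℕ → Finset ℕ := fun k => (f k).1 with hS
  set w : ℕ → ℝ := fun k => (f k).2.1 with hw
  set N : ℕ → ℕ := fun k => (f k).2.2 with hN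
  have hsub : ∀ k, ↑(S k) ⊆ C k := fun k => (hf1 k).1
  have hcard : ∀ k, (S k).card = k + 1 := fun k => (hf1 k).2.1
  have hup : ∀ k, ∀ n ∈ S k, x n ≤ w k ∧ n ≤ N k := fun k => (hf1 k).2.2.1
  have hlink : ∀ k, ∀ n ∈ S (k + 1), N k < n ∧ w k ≤ x n := fun k => hf2 k
  have hne : ∀ k, (S k).Nonempty := fun k => Finset.card_pos.mp (by rw [hcard]; omega)
  have hwmono : ∀ u v, u ≤ v → w u ≤ w v := by
    intro u v huv
    induction v with
    | zero => cases Nat.le_zero.mp huv; exact le_rfl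
    | succ v ih =>
      rcases Nat.lt_or_ge u (v + 1) with h | h
      · obtain ⟨n, hn⟩ := hne (v + 1)
        exact (ih (by omega)).trans ((hlink v n hn).2.trans (hup (v + 1) n hn).1)
      · have : u = v + 1 := by omega
        rw [this]
  have hNmono : ∀ u v, u ≤ v → N u ≤ N v := by
    intro u v huv
    induction v with
    | zero => cases Nat.le_zero.mp huv; exact le_rfl
    | succ v ih =>
      rcases Nat.lt_or_ge u (v + 1) with h | h
      · obtain ⟨n, hn⟩ := hne (v + 1)
        exact (ih (by omega)).trans ((hlink v n hn).1.le.trans (hup (v + 1) n hn).2)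
      · have : u = v + 1 := by omega
        rw [this]
  refine ⟨S, hsub, hcard, ?_⟩
  intro a ha b hb hab
  simp only [Set.mem_iUnion, Finset.mem_coe] at ha hb
  obtain ⟨u, hu⟩ := ha
  obtain ⟨v, hv⟩ := hb
  rcases lt_trichotomy u v with huv | huv | huv
  · -- different chunks, increasing
    obtain ⟨m, rfl⟩ : ∃ m, v = m + 1 := ⟨v - 1, by omega⟩
    have h1 : x a ≤ w u := (hup u a hu).1
    have h2 : w m ≤ x b := (hlink m b hv).2
    exact h1.trans ((hwmono u m (by omega)).trans h2)
  · subst huv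
    exact hmono u (hsub u hu) (hsub u hv) hab
  · -- contradiction with a ≤ b
    exfalso
    obtain ⟨m, rfl⟩ : ∃ m, u = m + 1 := ⟨u - 1, by omega⟩
    have h1 : b ≤ N v := (hup v b hv).2
    have h2 : N m < a := (hlink m a hu).1
    have h3 : N v ≤ N m := hNmono v m (by omega)
    omega

end AuxWR3
section AuxWR4

private lemma column_finite_heights (e : ℕ ≃ (ℕ × ℕ)) (j H : ℕ) :
    {n : ℕ | (e n).1 = j ∧ (e n).2 < H}.Finite := by
  have himg : {n : ℕ | (e n).1 = j ∧ (e n).2 < H} ⊆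
      ⇑e ⁻¹' ((fun b => (j, b)) '' Set.Iio H) := by
    rintro n ⟨h1, h2⟩
    exact ⟨(e n).2, h2, by rw [← h1]⟩
  exact (((Set.finite_Iio H).image _).preimage e.injective.injOn).subset himg

private lemma diagchain (e : ℕ ≃ (ℕ × ℕ)) (x : ℕ → ℝ) (j : ℕ → ℕ) (C : ℕ → Set ℕ)
    (hinf : ∀ k, (C k).Infinite) (hcol : ∀ k, ∀ n ∈ C k, (e n).1 = j k)
    (hmono : ∀ k, MonotoneOn x (C k)) (L : ℕ → ℝ)
    (hub : ∀ k, ∀ n ∈ C k, x n ≤ L k) (hlt : ∀ k w, w < L k → ∃ n ∈ C k, w < x n)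
    (hdec : StrictAnti L) :
    ∃ n : ℕ → ℕ, StrictMono n ∧ (∀ k, n k ∈ C k) ∧ AntitoneOn x (Set.range n) ∧
      (∀ l t, t ≤ 2 * l → j t ≤ (e (n l)).2) := by
  classical
  have hstep : ∀ (k : ℕ) (N : ℕ), ∃ m, m ∈ C k ∧ N < m ∧ L (k + 1) < x m ∧
      ∀ t, t ≤ 2 * k → j t ≤ (e m).2 := by
    intro k N
    obtain ⟨n₀, hn₀, hxn₀⟩ := hlt k (L (k + 1)) (hdec (Nat.lt_succ_self k))
    have hT : {n | n ∈ C k ∧ N < n ∧ x n₀ ≤ x n}.Infinite :=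
      tail_infinite (hinf k) (hmono k) hn₀ le_rfl N
    set H : ℕ := (Finset.range (2 * k + 1)).sup j with hH
    have hbad : {n : ℕ | (e n).1 = j k ∧ (e n).2 < H}.Finite := column_finite_heights e (j k) H
    obtain ⟨m, hm⟩ := (hT.diff hbad).nonempty
    obtain ⟨⟨hmC, hmN, hmx⟩, hm2⟩ := hm
    simp only [Set.mem_setOf_eq, not_and, not_lt] at hm2
    refine ⟨m, hmC, hmN, lt_of_lt_of_le hxn₀ hmx, fun t ht => ?_⟩
    exact (Finset.le_sup (Finset.mem_range.mpr (by omega))).trans (hm2 (hcol k m hmC))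
  obtain ⟨n, hn1, hn2⟩ := exists_seq_rec'
    (fun k m => m ∈ C k ∧ L (k + 1) < x m ∧ ∀ t, t ≤ 2 * k → j t ≤ (e m).2)
    (fun _ a b => a < b)
    (by
      obtain ⟨m, h1, _, h3, h4⟩ := hstep 0 0
      exact ⟨m, h1, h3, h4⟩)
    (by
      intro k s _
      obtain ⟨m, h1, h2, h3, h4⟩ := hstep (k + 1) s
      exact ⟨m, ⟨h1, h3, h4⟩, h2⟩)
  have hsm : StrictMono n := strictMono_nat_of_lt_succ hn2
  refine ⟨n, hsm, fun k => (hn1 k).1, ?_, fun l t ht => (hn1 l).2.2 t ht⟩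
  rintro _ ⟨u, rfl⟩ _ ⟨v, rfl⟩ hab
  have huv : u ≤ v := hsm.le_iff_le.mp hab
  rcases Nat.lt_or_ge u v with h | h
  · have h1 : x (n v) ≤ L v := hub v (n v) (hn1 v).1
    have h2 : L v ≤ L (u + 1) := hdec.antitone (by omega)
    exact h1.trans (h2.trans (hn1 u).2.1.le)
  · have : u = v := by omega
    rw [this]

end AuxWR4
section AuxWR5

private lemma keyWR (e : ℕ ≃ (ℕ × ℕ)) (x : ℕ → ℝ) (B : ℝ) (hB : ∀ n, x n ≤ B)
    (j : ℕ → ℕ) (hj : Function.Injective j) (C : ℕ → Set ℕ)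
    (hinf : ∀ k, (C k).Infinite) (hcol : ∀ k, ∀ n ∈ C k, (e n).1 = j k)
    (hmono : ∀ k, MonotoneOn x (C k)) :
    ∃ M : Set ℕ, e '' M ∉ WR ∧ (MonotoneOn x M ∨ AntitoneOn x M) := by
  classical
  set L : ℕ → ℝ := fun k => sSup (x '' C k) with hL
  have hne : ∀ k, (x '' C k).Nonempty := fun k => ((hinf k).nonempty).image x
  have hbdd : ∀ k, BddAbove (x '' C k) := fun k => ⟨B, by rintro _ ⟨n, _, rfl⟩; exact hB n⟩
  have hub : ∀ k, ∀ n ∈ C k, x n ≤ L k := fun k n hn => le_csSup (hbdd k) ⟨n, hn, rfl⟩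
  have hlt : ∀ k w, w < L k → ∃ n ∈ C k, w < x n := by
    intro k w hw
    obtain ⟨_, ⟨n, hn, rfl⟩, h⟩ := exists_lt_of_lt_csSup (hne k) hw
    exact ⟨n, hn, h⟩
  rcases trichotomyR L with ⟨ψ, hψ, hstrict⟩ | ⟨ψ, hψ, hstrict⟩ | ⟨ψ, hψ, hconst⟩
  · -- strictly increasing suprema: chunks inside columns ψ k
    obtain ⟨S, hSsub, hScard, hSmono⟩ := chunks x (fun k => C (ψ k))
      (fun k => hmono (ψ k)) (fun k v => v < L (ψ k)) (L (ψ 0) - 1) (by simp)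
      (by
        intro k v hv N
        obtain ⟨n₀, hn₀, hx₀⟩ := hlt (ψ k) v hv
        exact tail_infinite (hinf (ψ k)) (hmono (ψ k)) hn₀ hx₀.le N)
      (by
        intro k v _ n hn _
        exact lt_of_le_of_lt (hub (ψ k) n hn) (hstrict (Nat.lt_succ_self k)))
    refine ⟨⋃ k, ↑(S k), pos3 e _ (j ∘ ψ) (hj.comp hψ.injective) S
      (fun k => Set.subset_iUnion (fun k => ((S k : Finset ℕ) : Set ℕ)) k)
      (fun k => (hScard k).ge) (fun k n hn => hcol (ψ k) n (hSsub k hn)), Or.inl hSmono⟩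
  · -- strictly decreasing suprema: diagonal chain
    obtain ⟨n, hn1, hn2, hn3, hn4⟩ := diagchain e x (j ∘ ψ) (fun k => C (ψ k))
      (fun k => hinf (ψ k)) (fun k m hm => hcol (ψ k) m hm) (fun k => hmono (ψ k))
      (fun k => L (ψ k)) (fun k => hub (ψ k)) (fun k => hlt (ψ k)) hstrict
    refine ⟨Set.range n, pos2 e _ n (fun k => ⟨k, rfl⟩) ?_ ?_, Or.inr hn3⟩
    · have hcc : (fun k => (e (n k)).1) = fun k => j (ψ k) := by
        funext k
        exact hcol (ψ k) (n k) (hn2 k)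
      rw [hcc]
      exact hj.comp hψ.injective
    · intro l t ht
      calc (e (n t)).1 = j (ψ t) := hcol (ψ t) (n t) (hn2 t)
        _ ≤ (e (n l)).2 := hn4 l t ht
  · -- constant suprema
    set Lc : ℝ := L (ψ 0) with hLc
    by_cases hE : {k | ∃ n ∈ C (ψ k), x n = Lc}.Infinite
    · -- attained infinitely often: constant chunks
      obtain ⟨ρ, hρ, hρE⟩ := exists_strictMono_into hE
      set C' : ℕ → Set ℕ := fun k => {n | n ∈ C (ψ (ρ k)) ∧ x n = Lc} with hC'
      have hC'mono : ∀ k, MonotoneOn x (C' k) := by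
        intro k a ha b hb _
        rw [ha.2, hb.2]
      obtain ⟨S, hSsub, hScard, hSmono⟩ := chunks x C' hC'mono
        (fun _ v => v ≤ Lc) Lc le_rfl
        (by
          intro k v hv N
          obtain ⟨n₀, hn₀, hx₀⟩ := hρE k
          refine Set.Infinite.mono ?_ (tail_infinite (hinf (ψ (ρ k))) (hmono (ψ (ρ k))) hn₀
            (le_of_eq hx₀.symm) N)
          rintro m ⟨hm1, hm2, hm3⟩
          have hle : x m ≤ Lc := (hconst (ρ k)) ▸ hub (ψ (ρ k)) m hm1
          have : x m = Lc := le_antisymm hle hm3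
          exact ⟨⟨hm1, this⟩, hm2, hv.trans (le_of_eq this.symm)⟩
        )
        (by
          intro k v _ n hn _
          exact le_of_eq hn.2)
      refine ⟨⋃ k, ↑(S k), pos3 e _ (fun k => j (ψ (ρ k)))
        (hj.comp (hψ.comp hρ).injective) S
        (fun k => Set.subset_iUnion (fun k => ((S k : Finset ℕ) : Set ℕ)) k)
        (fun k => (hScard k).ge)
        (fun k n hn => hcol (ψ (ρ k)) n (hSsub k hn).1), Or.inl hSmono⟩
    · -- attained only finitely often: strictly-below chunks
      rw [Set.not_infinite] at hE
      obtain ⟨ρ, hρ, hρE⟩ := exists_strictMono_into hE.infinite_compl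
      have hnever : ∀ k, ∀ n ∈ C (ψ (ρ k)), x n < Lc := by
        intro k n hn
        have h1 : x n ≤ Lc := (hconst (ρ k)) ▸ hub (ψ (ρ k)) n hn
        rcases lt_or_eq_of_le h1 with h | h
        · exact h
        · exact absurd ⟨n, hn, h⟩ (hρE k)
      obtain ⟨S, hSsub, hScard, hSmono⟩ := chunks x (fun k => C (ψ (ρ k)))
        (fun k => hmono (ψ (ρ k))) (fun _ v => v < Lc) (Lc - 1) (by simp)
        (by
          intro k v hv N
          have hvL : v < L (ψ (ρ k)) := by rw [hconst (ρ k)]; exact hv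
          obtain ⟨n₀, hn₀, hx₀⟩ := hlt (ψ (ρ k)) v hvL
          exact tail_infinite (hinf (ψ (ρ k))) (hmono (ψ (ρ k))) hn₀ hx₀.le N)
        (by
          intro k v _ n hn _
          exact hnever k n hn)
      refine ⟨⋃ k, ↑(S k), pos3 e _ (fun k => j (ψ (ρ k)))
        (hj.comp (hψ.comp hρ).injective) S
        (fun k => Set.subset_iUnion (fun k => ((S k : Finset ℕ) : Set ℕ)) k)
        (fun k => (hScard k).ge)
        (fun k n hn => hcol (ψ (ρ k)) n (hSsub k hn)), Or.inl hSmono⟩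

end AuxWR5
section AuxWR6

private lemma keyWR2 (e : ℕ ≃ (ℕ × ℕ)) (x : ℕ → ℝ) (B : ℝ) (hB : ∀ n, |x n| ≤ B) :
    ∃ M : Set ℕ, e '' M ∉ WR ∧ (MonotoneOn x M ∨ AntitoneOn x M) := by
  classical
  have hAcol : ∀ i : ℕ, ({n : ℕ | (e n).1 = i} : Set ℕ).Infinite := by
    intro i
    have hcol : ({p : ℕ × ℕ | p.1 = i}).Infinite :=
      Set.infinite_of_injective_forall_mem (f := fun b : ℕ => (i, b))
        (fun a b hab => (Prod.mk.injEq _ _ _ _ ▸ hab).2) (fun b => rfl)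
    have := hcol.preimage (f := ⇑e) (by rw [Equiv.range_eq_univ]; exact Set.subset_univ _)
    exact this
  have hDex : ∀ i : ℕ, ∃ D : Set ℕ, D ⊆ {n : ℕ | (e n).1 = i} ∧ D.Infinite ∧
      (MonotoneOn x D ∨ AntitoneOn x D) := fun i => exists_monoOn_subset x _ (hAcol i)
  choose D hD1 hD2 hD3 using hDex
  have hsplit : {i | MonotoneOn x (D i)}.Infinite ∨ {i | AntitoneOn x (D i)}.Infinite := by
    by_contra h
    push_neg at h
    have : (Set.univ : Set ℕ).Finite := by
      refine (h.1.union h.2).subset ?_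
      intro i _
      rcases hD3 i with hc | hc
      · exact Or.inl hc
      · exact Or.inr hc
    exact Set.infinite_univ this
  rcases hsplit with h | h
  · obtain ⟨ψ, hψ, hmem⟩ := exists_strictMono_into h
    exact keyWR e x B (fun n => (abs_le.mp (hB n)).2) ψ hψ.injective (fun k => D (ψ k))
      (fun k => hD2 (ψ k)) (fun k n hn => hD1 (ψ k) hn) (fun k => hmem k)
  · obtain ⟨ψ, hψ, hmem⟩ := exists_strictMono_into h
    obtain ⟨M, hM, hcase⟩ := keyWR e (fun n => -x n) B
      (fun n => by show -x n ≤ B; have := (abs_le.mp (hB n)).1; linarith) ψ hψ.injective (fun k => D (ψ k))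
      (fun k => hD2 (ψ k)) (fun k n hn => hD1 (ψ k) hn)
      (fun k a ha b hb hab => neg_le_neg ((hmem k) ha hb hab))
    refine ⟨M, hM, ?_⟩
    rcases hcase with hc | hc
    · right
      intro a ha b hb hab
      have := hc ha hb hab
      simpa using this
    · left
      intro a ha b hb hab
      have := hc ha hb hab
      simpa using this

end AuxWR6
theorem WR_iso_Mon (I : Set (Set ℕ)) (hI : IsIdealOn I)
    (hiso : ∃ e : ℕ ≃ (ℕ × ℕ), ∀ A : Set (ℕ × ℕ), A ∈ WR ↔ ⇑e ⁻¹' A ∈ I) :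
    ∀ x : ℕ → ℝ, ∃ M : Set ℕ, M ∉ I ∧ (MonotoneOn x M ∨ AntitoneOn x M) := by
  obtain ⟨e, he⟩ := hiso
  intro x
  obtain ⟨M, hM, hcase⟩ := keyWR2 e (fun n => Real.arctan (x n)) (Real.pi / 2)
    (fun n => (abs_lt.mpr ⟨Real.neg_pi_div_two_lt_arctan (x n),
      Real.arctan_lt_pi_div_two (x n)⟩).le)
  refine ⟨M, ?_, ?_⟩
  · intro hMI
    exact hM ((he (e '' M)).mpr (by rwa [Equiv.preimage_image]))
  · rcases hcase with h | h
    · left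
      intro a ha b hb hab
      exact Real.arctan_strictMono.le_iff_le.mp (h ha hb hab)
    · right
      intro a ha b hb hab
      exact Real.arctan_strictMono.le_iff_le.mp (h ha hb hab)
end

section
/- The ideal WR is not 2-Ramsey: there is a coloring λ: [ω×ω]² → 2 such that every λ-homogeneous set belongs to WR. -/
open Set

theorem WR_not_twoRamsey :
    (¬ ∀ f : (ℕ × ℕ) → (ℕ × ℕ) → Bool, (∀ p q, f p q = f q p) →
      ∃ H : Set (ℕ × ℕ), H ∉ WR ∧ ∃ c, ∀ p ∈ H, ∀ q ∈ H, p ≠ q → f p q = c) ∧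
    (∃ lam : (ℕ × ℕ) → (ℕ × ℕ) → Bool, (∀ p q, lam p q = lam q p) ∧
      ∀ H : Set (ℕ × ℕ), (∃ c, ∀ p ∈ H, ∀ q ∈ H, p ≠ q → lam p q = c) → H ∈ WR) := by
  have key : (∃ lam : (ℕ × ℕ) → (ℕ × ℕ) → Bool, (∀ p q, lam p q = lam q p) ∧
      ∀ H : Set (ℕ × ℕ), (∃ c, ∀ p ∈ H, ∀ q ∈ H, p ≠ q → lam p q = c) → H ∈ WR) := by
    classical
    refine ⟨fun p q => decide ((p.1 < q.1 ∧ q.1 > p.1 + p.2) ∨ (q.1 < p.1 ∧ p.1 > q.1 + q.2)),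
      ?_, ?_⟩
    · intro p q
      simp only [decide_eq_decide]
      tauto
    · rintro H ⟨c, hc⟩
      cases c with
      | true =>
        refine ⟨{H}, ?_, ?_⟩
        · intro S hS
          simp only [Finset.mem_singleton] at hS
          subst hS
          right
          intro p hp q hq hpq
          have := hc p hp q hq hpq
          simp only [decide_eq_true_eq] at this
          tauto
        · simp
      | false =>
        rcases Set.eq_empty_or_nonempty H with hH | ⟨⟨i, j⟩, hij⟩
        · exact ⟨∅, by simp, by simp [hH]⟩
        · refine ⟨(Finset.range (i + j + 1)).image (fun m => {p : ℕ × ℕ | p.1 = m}),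
            ?_, ?_⟩
          · intro S hS
            simp only [Finset.mem_image] at hS
            obtain ⟨m, _, rfl⟩ := hS
            exact Or.inl ⟨m, rfl⟩
          · rintro ⟨k, l⟩ hkl
            have hk : k ≤ i + j := by
              by_cases heq : ((i, j) : ℕ × ℕ) = (k, l)
              · simp only [Prod.mk.injEq] at heq
                omega
              · have := hc (i, j) hij (k, l) hkl heq
                simp only [decide_eq_false_iff_not, not_or, not_and] at this
                obtain ⟨h1, h2⟩ := this
                omega
            refine Set.mem_sUnion.mpr ⟨{p : ℕ × ℕ | p.1 = k}, ?_, rfl⟩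
            simp only [Finset.coe_image, Finset.coe_range, Set.mem_image,
              Set.mem_Iio]
            exact ⟨k, by omega, rfl⟩
  obtain ⟨lam, hsym, hlam⟩ := key
  constructor
  · intro h
    obtain ⟨H, hHnot, hhom⟩ := h lam hsym
    exact hHnot (hlam H hhom)
  · exact ⟨lam, hsym, hlam⟩
end

section
/- An ideal I on ω is weakly Ramsey if and only if for every coloring f: [ω]² → 2, such that for each x ∈ ω at least one of the sets {y : f({x,y}) = 0} and {y : f({x,y}) = 1} belongs to I, there is an I-positive set H with f constant on [H]². -/
open Set

lemma ideal_biUnion_finset {α β : Type*} {I : Set (Set α)} (hI : IsIdealOn I)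
    (s : Finset β) {g : β → Set α} (hg : ∀ b ∈ s, g b ∈ I) :
    (⋃ b ∈ s, g b) ∈ I := by
  classical
  induction s using Finset.induction_on with
  | empty => simpa using hI.2.2.1 ∅ Set.finite_empty
  | @insert a t hat ih =>
    rw [Finset.set_biUnion_insert]
    exact hI.2.1 _ (hg a (Finset.mem_insert_self _ _)) _
      (ih fun b hb => hg b (Finset.mem_insert_of_mem hb))

lemma ideal_biUnion {α β : Type*} {I : Set (Set α)} (hI : IsIdealOn I)
    {s : Set β} (hs : s.Finite) {g : β → Set α} (hg : ∀ b ∈ s, g b ∈ I) :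
    (⋃ b ∈ s, g b) ∈ I := by
  classical
  have heq : (⋃ b ∈ s, g b) = ⋃ b ∈ hs.toFinset, g b := by simp
  rw [heq]
  exact ideal_biUnion_finset hI _ (fun b hb => hg b (by simpa using hb))

theorem weaklyRamsey_iff_coloring (I : Set (Set ℕ)) (hI : IsIdealOn I) :
    WeaklyRamsey I ↔
    ∀ f : ℕ → ℕ → Bool, (∀ x y, f x y = f y x) →
      (∀ x : ℕ, {y | f x y = false} ∈ I ∨ {y | f x y = true} ∈ I) →
      ∃ H : Set ℕ, H ∉ I ∧ ∃ c, ∀ x ∈ H, ∀ y ∈ H, x ≠ y → f x y = c := by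
  classical
  obtain ⟨hsub, hun, hfin, huniv⟩ := hI
  constructor
  · -- WeaklyRamsey → coloring
    intro hWR f hsymm hvert
    set good : ℕ → Bool := fun x => if {y | f x y = false} ∈ I then true else false with hgooddef
    have hgood : ∀ x, {y | f x y ≠ good x} ∈ I := by
      intro x
      by_cases h : {y | f x y = false} ∈ I
      · simpa [hgooddef, h] using h
      · have := (hvert x).resolve_left h
        simpa [hgooddef, h] using this
    set R : ℕ → ℕ → Prop := fun a b => f a b = good a with hR
    set T : Set (List ℕ) := {s | s.Pairwise R} with hT
    have hnil : ([] : List ℕ) ∈ T := List.Pairwise.nil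
    have htree : IsTree T := by
      intro s hs t ht
      exact List.Pairwise.sublist ht.sublist hs
    have hram : ∀ s ∈ T, {x : ℕ | s ++ [x] ∈ T}ᶜ ∈ I := by
      intro s hs
      have hsubset : {x : ℕ | s ++ [x] ∈ T}ᶜ ⊆ ⋃ a ∈ {a | a ∈ s}, {y | f a y ≠ good a} := by
        intro x hx
        simp only [mem_compl_iff, mem_setOf_eq, hT] at hx
        by_contra hcon
        apply hx
        rw [List.pairwise_append]
        refine ⟨hs, List.pairwise_singleton _ _, ?_⟩
        intro a ha b hb
        simp only [List.mem_singleton] at hb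
        subst hb
        by_contra hfa
        exact hcon (Set.mem_biUnion ha hfa)
      exact hsub _ (ideal_biUnion ⟨hsub, hun, hfin, huniv⟩ s.finite_toSet
        fun a _ => hgood a) _ hsubset
    obtain ⟨b, hbT, hbpos⟩ := hWR T hnil htree hram
    have key : ∀ i j, i < j → f (b i) (b j) = good (b i) := by
      intro i j hij
      have := hbT (j + 1)
      rw [hT, Set.mem_setOf_eq, List.pairwise_map] at this
      rw [List.pairwise_iff_getElem] at this
      have hi : i < (List.range (j+1)).length := by simp; omega
      have hj : j < (List.range (j+1)).length := by simp
      have := this i j hi hj (by simpa [List.getElem_range] using hij)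
      simpa [List.getElem_range] using this
    have hsplit : Set.range b ⊆ (Set.range b ∩ {x | good x = true}) ∪
        (Set.range b ∩ {x | good x = false}) := by
      intro x hx
      rcases Bool.eq_false_or_eq_true (good x) with h | h
      · exact Or.inl ⟨hx, h⟩
      · exact Or.inr ⟨hx, h⟩
    have : ∃ c, Set.range b ∩ {x | good x = c} ∉ I := by
      by_contra hcon
      push_neg at hcon
      exact hbpos (hsub _ (hun _ (hcon true) _ (hcon false)) _ hsplit)
    obtain ⟨c, hc⟩ := this
    refine ⟨Set.range b ∩ {x | good x = c}, hc, c, ?_⟩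
    rintro x ⟨⟨i, rfl⟩, hgx⟩ y ⟨⟨j, rfl⟩, hgy⟩ hxy
    rcases lt_trichotomy i j with h | h | h
    · rw [key i j h]; exact hgx
    · exact absurd (by rw [h]) hxy
    · rw [hsymm, key j i h]; exact hgy
  · -- coloring → WeaklyRamsey
    intro hcol T hnil htree hram
    set P : ℕ → ℕ → Prop := fun x y =>
      ∀ l : List ℕ, l ∈ T → l.Pairwise (· < ·) → (∀ i ∈ l, i ≤ min x y) →
        l ++ [max x y] ∈ T with hP
    set f : ℕ → ℕ → Bool := fun x y => decide (P x y) with hf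
    have hfsymm : ∀ x y, f x y = f y x := by
      intro x y
      simp only [hf, hP, min_comm x y, max_comm x y]
    have hfalse : ∀ x, {y | f x y = false} ∈ I := by
      intro x
      have hLfin : {l : List ℕ | l.Pairwise (· < ·) ∧ ∀ i ∈ l, i ≤ x}.Finite := by
        have : {l : List ℕ | l.Pairwise (· < ·) ∧ ∀ i ∈ l, i ≤ x} ⊆
            (fun s : Finset ℕ => s.sort (· ≤ ·)) '' ↑((Finset.range (x+1)).powerset) := by
          rintro l ⟨hl1, hl2⟩
          refine ⟨l.toFinset, ?_, ?_⟩
          · simp only [Finset.coe_powerset, Set.mem_preimage, Set.mem_powerset_iff,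
              Finset.coe_range]
            intro i hi
            simp only [Finset.mem_coe, List.mem_toFinset] at hi
            exact Set.mem_Iio.2 (Nat.lt_succ_of_le (hl2 i hi))
          · exact (List.toFinset_sort (· ≤ ·) hl1.nodup).2 (hl1.imp le_of_lt)
        exact Set.Finite.subset (((Finset.range (x+1)).powerset.finite_toSet).image _) this
      have hsubset : {y | f x y = false} ⊆
          {y | y ≤ x} ∪ ⋃ l ∈ {l : List ℕ | l ∈ T ∧ l.Pairwise (· < ·) ∧ ∀ i ∈ l, i ≤ x},
            {y | l ++ [y] ∈ T}ᶜ := by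
        intro y hy
        simp only [mem_setOf_eq, hf, decide_eq_false_iff_not, hP] at hy
        push_neg at hy
        obtain ⟨l, hlT, hlsort, hlle, hlnot⟩ := hy
        by_cases hyx : y ≤ x
        · exact Or.inl hyx
        · push_neg at hyx
          have hmin : min x y = x := min_eq_left hyx.le
          have hmax : max x y = y := max_eq_right hyx.le
          rw [hmin] at hlle
          rw [hmax] at hlnot
          exact Or.inr (Set.mem_biUnion ⟨hlT, hlsort, hlle⟩ hlnot)
      refine hsub _ ?_ _ hsubset
      refine hun _ (hfin _ (Set.finite_Iic x)) _ ?_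
      refine ideal_biUnion ⟨hsub, hun, hfin, huniv⟩ (hLfin.subset ?_) ?_
      · rintro l ⟨_, h⟩; exact h
      · rintro l ⟨hlT, _, _⟩
        exact hram l hlT
    obtain ⟨H, hHpos, c, hHmono⟩ := hcol f hfsymm (fun x => Or.inl (hfalse x))
    have hHinf : H.Infinite := by
      intro hHf
      exact hHpos (hfin _ hHf)
    -- c must be true
    have hc : c = true := by
      by_contra hcf
      rw [Bool.not_eq_true] at hcf
      subst hcf
      obtain ⟨x, hx⟩ := hHinf.nonempty
      have : H \ {x} ⊆ {y | f x y = false} := by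
        rintro y ⟨hy, hyx⟩
        exact hHmono x hx y hy (fun h => hyx (by rw [h]; rfl))
      have h1 : H \ {x} ∈ I := hsub _ (hfalse x) _ this
      have h2 : H ⊆ (H \ {x}) ∪ {x} := by
        intro z hz
        by_cases hzx : z = x
        · exact Or.inr hzx
        · exact Or.inl ⟨hz, hzx⟩
      exact hHpos (hsub _ (hun _ h1 _ (hfin _ (finite_singleton x))) _ h2)
    subst hc
    set p : ℕ → Prop := fun n => n ∈ H with hp
    have hpinf : (setOf p).Infinite := hHinf
    have hmono : StrictMono (Nat.nth p) := Nat.nth_strictMono hpinf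
    have hmem : ∀ k, Nat.nth p k ∈ H := fun k => Nat.nth_mem_of_infinite hpinf k
    set b : ℕ → ℕ := fun k => Nat.nth p (k + 1) with hb
    have hLmem : ∀ k, (List.range k).map b ∈ T := by
      intro k
      induction k with
      | zero => simpa using hnil
      | succ k ih =>
        have hrange : List.range (k+1) = List.range k ++ [k] := by
          simpa using List.range_succ (n := k)
        rw [hrange, List.map_append, List.map_cons, List.map_nil]
        have hx : Nat.nth p k ∈ H := hmem k
        have hy : b k ∈ H := hmem (k+1)
        have hxy : Nat.nth p k < b k := hmono (Nat.lt_succ_self k)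
        have hfxy : f (Nat.nth p k) (b k) = true :=
          hHmono _ hx _ hy (Nat.ne_of_lt hxy)
        rw [hf] at hfxy
        have hPxy : P (Nat.nth p k) (b k) := of_decide_eq_true hfxy
        have hminxy : min (Nat.nth p k) (b k) = Nat.nth p k := min_eq_left hxy.le
        have hmaxxy : max (Nat.nth p k) (b k) = b k := max_eq_right hxy.le
        have hsorted : ((List.range k).map b).Pairwise (· < ·) := by
          rw [List.pairwise_map]
          rw [List.pairwise_iff_getElem]
          intro i j hi hj hij
          simp only [List.getElem_range]
          exact hmono (by omega)
        have hle : ∀ i ∈ (List.range k).map b, i ≤ min (Nat.nth p k) (b k) := by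
          intro i hi
          rw [hminxy]
          simp only [List.mem_map, List.mem_range] at hi
          obtain ⟨j, hj, rfl⟩ := hi
          exact hmono.monotone (by omega)
        have := hPxy _ ih hsorted hle
        rwa [hmaxxy] at this
    refine ⟨b, hLmem, ?_⟩
    intro hbI
    have hHsub : H ⊆ Set.range b ∪ {Nat.nth p 0} := by
      intro z hz
      obtain ⟨k, hk⟩ := Nat.subset_range_nth (p := p) hz
      cases k with
      | zero => exact Or.inr (by rw [← hk]; rfl)
      | succ k => exact Or.inl ⟨k, hk⟩
    exact hHpos (hsub _ (hun _ hbI _ (hfin _ (finite_singleton _))) _ hHsub)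
end

section
/- Every weakly selective ideal on ω is weakly Ramsey. -/
open Set

/-- Auxiliary: an ideal is closed under finite unions of its members. -/
private lemma idealSUnion {α : Type*} {I : Set (Set α)}
    (hfin : ∀ A : Set α, A.Finite → A ∈ I)
    (hunion : ∀ A ∈ I, ∀ B ∈ I, A ∪ B ∈ I) :
    ∀ C : Set (Set α), C.Finite → (∀ A ∈ C, A ∈ I) → ⋃₀ C ∈ I := by
  intro C hC
  obtain ⟨F, rfl⟩ := hC.exists_finset_coe
  clear hC
  classical
  induction F using Finset.induction_on with
  | empty => intro _; simpa using hfin _ Set.finite_empty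
  | @insert A F hA ih =>
    intro hmem
    rw [Finset.coe_insert, Set.sUnion_insert]
    exact hunion _ (hmem A (by simp)) _
      (ih fun B hB => hmem B (Finset.mem_coe.2 (Finset.mem_insert_of_mem (Finset.mem_coe.1 hB))))

/-- Auxiliary: there are only finitely many lists of bounded length with bounded entries. -/
private lemma finite_bounded_lists (n : ℕ) :
    {s : List ℕ | s.length ≤ n ∧ ∀ a ∈ s, a ≤ n}.Finite := by
  have h1 : {l : List (Fin (n+1)) | l.length ≤ n}.Finite := List.finite_length_le (Fin (n+1)) n
  refine (h1.image (fun l => l.map Fin.val)).subset ?_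
  rintro s ⟨hlen, hb⟩
  refine ⟨s.map (fun a => (⟨min a n, Nat.lt_succ_of_le (Nat.min_le_right a n)⟩ : Fin (n+1))),
    by simpa using hlen, ?_⟩
  simp only [List.map_map]
  have hcongr : ∀ a ∈ s,
      (Fin.val ∘ fun a : ℕ => (⟨min a n, Nat.lt_succ_of_le (Nat.min_le_right a n)⟩ : Fin (n+1))) a
        = id a := by
    intro a ha
    have := hb a ha
    simp [Function.comp]
    omega
  rw [List.map_congr_left hcongr, List.map_id]

theorem weaklySelective_weaklyRamsey (I : Set (Set ℕ)) (hI : IsIdealOn I)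
    (h : WeaklySelective I) : WeaklyRamsey I := by
  classical
  obtain ⟨hdown, hunion, hfin, huniv⟩ := hI
  intro T hnil htree hT
  -- the fusion sets
  obtain ⟨Y, hYmem⟩ : ∃ Y : ℕ → Set ℕ, ∀ n x, x ∈ Y n ↔
      (n < x ∧ ∀ s : List ℕ, s ∈ T → s.length ≤ n → (∀ a ∈ s, a ≤ n) → s ++ [x] ∈ T) :=
    ⟨fun n => {x | n < x ∧ ∀ s : List ℕ, s ∈ T → s.length ≤ n → (∀ a ∈ s, a ≤ n) → s ++ [x] ∈ T},
      fun n x => Iff.rfl⟩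
  have hYc : ∀ n, (Y n)ᶜ ∈ I := by
    intro n
    have hDfin : ({s : List ℕ | s.length ≤ n ∧ ∀ a ∈ s, a ≤ n} ∩ T).Finite :=
      (finite_bounded_lists n).inter_of_left T
    have hCfin : ((fun s : List ℕ => {x : ℕ | s ++ [x] ∉ T}) ''
        ({s : List ℕ | s.length ≤ n ∧ ∀ a ∈ s, a ≤ n} ∩ T)).Finite := hDfin.image _
    have hCmem : ∀ A ∈ (fun s : List ℕ => {x : ℕ | s ++ [x] ∉ T}) ''
        ({s : List ℕ | s.length ≤ n ∧ ∀ a ∈ s, a ≤ n} ∩ T), A ∈ I := by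
      rintro A ⟨s, hsD, rfl⟩
      have h1 := hT s hsD.2
      rw [Set.compl_setOf] at h1
      exact h1
    have hU := idealSUnion hfin hunion _ hCfin hCmem
    refine hdown _ (hunion _ (hfin {x : ℕ | x ≤ n} (Set.finite_le_nat n)) _ hU) _ ?_
    intro x hx
    rw [Set.mem_compl_iff, hYmem] at hx
    by_cases hxn : n < x
    · have hx' : ¬ ∀ s : List ℕ, s ∈ T → s.length ≤ n → (∀ a ∈ s, a ≤ n) → s ++ [x] ∈ T :=
        fun hall => hx ⟨hxn, hall⟩
      push_neg at hx'
      obtain ⟨s, hsT, hlen, hb, hns⟩ := hx'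
      exact Or.inr ⟨_, ⟨s, ⟨⟨hlen, hb⟩, hsT⟩, rfl⟩, hns⟩
    · exact Or.inl (Nat.le_of_not_lt hxn)
  have hYpos : ∀ n, Y n ∉ I := by
    intro n hn
    have h2 := hunion _ hn _ (hYc n)
    rw [Set.union_compl_self] at h2
    exact huniv h2
  have hYanti : ∀ m n : ℕ, m ≤ n → Y n ⊆ Y m := by
    intro m n hmn x hx
    rw [hYmem] at hx ⊢
    exact ⟨by omega, fun s hs hlen hb => hx.2 s hs (hlen.trans hmn) fun a ha => (hb a ha).trans hmn⟩
  have hYlt : ∀ n x, x ∈ Y n → n < x := fun n x hx => ((hYmem n x).1 hx).1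
  -- the level function
  obtain ⟨lev, hlevmem, hlevge, hlevnot⟩ :
      ∃ lev : ℕ → ℕ, (∀ x, x ∈ Y 0 → x ∈ Y (lev x)) ∧ (∀ x n, x ∈ Y n → n ≤ lev x) ∧
        (∀ x, x ∉ Y (lev x + 1)) := by
    refine ⟨fun x => Nat.findGreatest (fun n => x ∈ Y n) x, ?_, ?_, ?_⟩
    · exact fun x hx => Nat.findGreatest_spec (P := fun n => x ∈ Y n) (Nat.zero_le x) hx
    · exact fun x n hx => Nat.le_findGreatest (P := fun n => x ∈ Y n) (Nat.le_of_lt (hYlt n x hx)) hx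
    · intro x hx
      have hlt : Nat.findGreatest (fun n => x ∈ Y n) x + 1 < x := hYlt _ _ hx
      exact Nat.findGreatest_is_greatest (P := fun n => x ∈ Y n) (Nat.lt_succ_self _) (Nat.le_of_lt hlt) hx
  have hlevlt : ∀ x, x ∈ Y 0 → lev x < x := fun x hx => hYlt _ _ (hlevmem x hx)
  -- first partition: pieces are the level sets
  obtain ⟨X, hX0mem, hXsmem⟩ :
      ∃ X : ℕ → Set ℕ, (∀ x, x ∈ X 0 ↔ x ∉ Y 0) ∧
        (∀ m x, x ∈ X (m+1) ↔ (x ∈ Y m ∧ x ∉ Y (m+1))) :=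
    ⟨fun n => match n with | 0 => (Y 0)ᶜ | (m+1) => Y m \ Y (m+1), fun _ => Iff.rfl, fun _ _ => Iff.rfl⟩
  have hXpart : IsPartition X := by
    constructor
    · have hdisj : ∀ m n : ℕ, m < n → Disjoint (X m) (X n) := by
        intro m n hlt
        rw [Set.disjoint_left]
        intro x hxm hxn
        obtain ⟨k, rfl⟩ : ∃ k, n = k + 1 := ⟨n - 1, by omega⟩
        have hxY : x ∈ Y k := ((hXsmem k x).1 hxn).1
        cases m with
        | zero => exact (hX0mem x).1 hxm (hYanti 0 k (Nat.zero_le k) hxY)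
        | succ j => exact ((hXsmem j x).1 hxm).2 (hYanti (j+1) k (by omega) hxY)
      intro m n hmn
      rcases Nat.lt_or_ge m n with hlt | hge
      · exact hdisj m n hlt
      · exact (hdisj n m (by omega)).symm
    · ext x
      simp only [Set.mem_iUnion, Set.mem_univ, iff_true]
      by_cases hx : x ∈ Y 0
      · exact ⟨lev x + 1, (hXsmem (lev x) x).2 ⟨hlevmem x hx, hlevnot x⟩⟩
      · exact ⟨0, (hX0mem x).2 hx⟩
  have hXI : ∀ n, X n ∈ I := by
    intro n
    cases n with
    | zero => exact hdown _ (hYc 0) _ fun x hx => (hX0mem x).1 hx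
    | succ m => exact hdown _ (hYc (m+1)) _ fun x hx => ((hXsmem m x).1 hx).2
  have hXsub : {n | X n ∉ I}.Subsingleton := fun a ha _ _ => absurd (hXI a) ha
  have hXtail : ∀ n, (⋃ m, ⋃ _ : n ≤ m, X m) ∉ I := by
    intro n hn
    refine hYpos n (hdown _ hn _ fun x hx => ?_)
    have h1 : x ∈ Y 0 := hYanti 0 n (Nat.zero_le n) hx
    have h2 : n ≤ lev x := hlevge x n hx
    exact Set.mem_iUnion.2 ⟨lev x + 1, Set.mem_iUnion.2
      ⟨by omega, (hXsmem (lev x) x).2 ⟨hlevmem x h1, hlevnot x⟩⟩⟩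
  obtain ⟨S₁, hS₁sel, hS₁pos⟩ := h X hXpart hXsub hXtail
  -- restrict the selector to `Y 0`
  have hS1pos : S₁ ∩ Y 0 ∉ I := by
    intro hc
    have hsmall : S₁ ∩ X 0 ∈ I := hfin _ (hS₁sel 0).finite
    refine hS₁pos (hdown _ (hunion _ hc _ hsmall) _ fun x hx => ?_)
    by_cases hxY : x ∈ Y 0
    · exact Or.inl ⟨hx, hxY⟩
    · exact Or.inr ⟨hx, (hX0mem x).2 hxY⟩
  have hlevinj : ∀ x ∈ S₁ ∩ Y 0, ∀ y ∈ S₁ ∩ Y 0, lev x = lev y → x = y := by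
    intro x hx y hy hxy
    refine hS₁sel (lev x + 1) ⟨hx.1, (hXsmem (lev x) x).2 ⟨hlevmem x hx.2, hlevnot x⟩⟩
      ⟨hy.1, (hXsmem (lev x) y).2 ?_⟩
    rw [hxy]
    exact ⟨hlevmem y hy.2, hlevnot y⟩
  have hKfin : ∀ n : ℕ, {x | x ∈ S₁ ∩ Y 0 ∧ lev x < n}.Finite := by
    intro n
    have himg : (lev '' {x | x ∈ S₁ ∩ Y 0 ∧ lev x < n}).Finite :=
      (Set.finite_Iio n).subset (by rintro _ ⟨x, ⟨_, hlt⟩, rfl⟩; exact Set.mem_Iio.2 hlt)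
    exact Set.Finite.of_finite_image himg fun x hx y hy hxy => hlevinj x hx.1 y hy.1 hxy
  have hbnd : ∀ n : ℕ, ∃ B : ℕ, ∀ x, x ∈ S₁ ∩ Y 0 → lev x < n → x < B := by
    intro n
    obtain ⟨B, hB⟩ := (hKfin n).bddAbove
    exact ⟨B + 1, fun x hx hlt => Nat.lt_succ_of_le (hB ⟨hx, hlt⟩)⟩
  choose Bf hBf using hbnd
  -- the block boundaries
  obtain ⟨M, hM0, hMsucc⟩ : ∃ M : ℕ → ℕ, M 0 = 0 ∧ ∀ j, M (j+1) = max (M j + 1) (Bf (M j)) :=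
    ⟨fun j => Nat.rec (motive := fun _ => ℕ) 0 (fun _ prev => max (prev + 1) (Bf prev)) j,
      rfl, fun _ => rfl⟩
  have hMlt : ∀ j, M j < M (j+1) := fun j => by
    rw [hMsucc]; exact Nat.lt_of_lt_of_le (Nat.lt_succ_self _) (le_max_left _ _)
  have hMmono : ∀ j k : ℕ, j ≤ k → M j ≤ M k := fun j k hjk =>
    (strictMono_nat_of_lt_succ hMlt).monotone hjk
  have hMge : ∀ j, j ≤ M j := by
    intro j
    induction j with
    | zero => omega
    | succ k ih => have := hMlt k; omega
  have hMbnd : ∀ j x, x ∈ S₁ ∩ Y 0 → lev x < M j → x < M (j+1) := by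
    intro j x hx hlt
    have h1 := hBf (M j) x hx hlt
    have h2 : Bf (M j) ≤ M (j+1) := by rw [hMsucc]; exact le_max_right _ _
    omega
  -- the block function
  obtain ⟨blk, hblk1, hblk2⟩ :
      ∃ blk : ℕ → ℕ, (∀ x, M (blk x) ≤ lev x) ∧ (∀ x, lev x < M (blk x + 1)) := by
    refine ⟨fun x => Nat.findGreatest (fun j => M j ≤ lev x) (lev x), fun x => ?_, fun x => ?_⟩
    · show M (Nat.findGreatest (fun j => M j ≤ lev x) (lev x)) ≤ lev x
      exact Nat.findGreatest_spec (P := fun j => M j ≤ lev x) (Nat.zero_le _)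
        (by show M 0 ≤ lev x; rw [hM0]; exact Nat.zero_le _)
    · show lev x < M (Nat.findGreatest (fun j => M j ≤ lev x) (lev x) + 1)
      by_cases hc : Nat.findGreatest (fun j => M j ≤ lev x) (lev x) + 1 ≤ lev x
      · have hng := Nat.findGreatest_is_greatest (P := fun j => M j ≤ lev x)
          (k := Nat.findGreatest (fun j => M j ≤ lev x) (lev x) + 1) (by omega) hc
        omega
      · have := hMge (Nat.findGreatest (fun j => M j ≤ lev x) (lev x) + 1)
        omega
  -- second partition: pieces are the (finite) blocks
  obtain ⟨X', hX'0mem, hX'smem⟩ :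
      ∃ X' : ℕ → Set ℕ, (∀ x, x ∈ X' 0 ↔ x ∉ S₁ ∩ Y 0) ∧
        (∀ j x, x ∈ X' (j+1) ↔ (x ∈ S₁ ∩ Y 0 ∧ blk x = j)) :=
    ⟨fun n => match n with | 0 => (S₁ ∩ Y 0)ᶜ | (j+1) => {x | x ∈ S₁ ∩ Y 0 ∧ blk x = j},
      fun _ => Iff.rfl, fun _ _ => Iff.rfl⟩
  have hQfin : ∀ j, (X' (j+1)).Finite := by
    intro j
    refine (hKfin (M (j+1))).subset ?_
    intro x hx
    obtain ⟨hx1, hx2⟩ := (hX'smem j x).1 hx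
    exact ⟨hx1, by rw [← hx2]; exact hblk2 x⟩
  have hX'part : IsPartition X' := by
    constructor
    · have hdisj : ∀ m n : ℕ, m < n → Disjoint (X' m) (X' n) := by
        intro m n hlt
        rw [Set.disjoint_left]
        intro x hxm hxn
        obtain ⟨k, rfl⟩ : ∃ k, n = k + 1 := ⟨n - 1, by omega⟩
        have hx1 := (hX'smem k x).1 hxn
        cases m with
        | zero => exact (hX'0mem x).1 hxm hx1.1
        | succ j =>
          have hx2 := (hX'smem j x).1 hxm
          have := hx1.2
          have := hx2.2
          omega
      intro m n hmn
      rcases Nat.lt_or_ge m n with hlt | hge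
      · exact hdisj m n hlt
      · exact (hdisj n m (by omega)).symm
    · ext x
      simp only [Set.mem_iUnion, Set.mem_univ, iff_true]
      by_cases hx : x ∈ S₁ ∩ Y 0
      · exact ⟨blk x + 1, (hX'smem (blk x) x).2 ⟨hx, rfl⟩⟩
      · exact ⟨0, (hX'0mem x).2 hx⟩
  have hX'sub : {n | X' n ∉ I}.Subsingleton := by
    intro a ha b hb
    cases a with
    | zero =>
      cases b with
      | zero => rfl
      | succ k => exact absurd (hfin _ (hQfin k)) hb
    | succ j => exact absurd (hfin _ (hQfin j)) ha
  have hX'tail : ∀ n, (⋃ m, ⋃ _ : n ≤ m, X' m) ∉ I := by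
    intro n hn
    have hsmall : {x | x ∈ S₁ ∩ Y 0 ∧ lev x < M n}.Finite := hKfin (M n)
    refine hS1pos (hdown _ (hunion _ hn _ (hfin _ hsmall)) _ fun x hx => ?_)
    by_cases hc : n ≤ blk x + 1
    · exact Or.inl (Set.mem_iUnion.2 ⟨blk x + 1, Set.mem_iUnion.2
        ⟨hc, (hX'smem (blk x) x).2 ⟨hx, rfl⟩⟩⟩)
    · refine Or.inr ⟨hx, ?_⟩
      have h2 := hblk2 x
      have h3 : M (blk x + 1) ≤ M n := hMmono _ _ (by omega)
      omega
  obtain ⟨S₂, hS₂sel, hS₂pos⟩ := h X' hX'part hX'sub hX'tail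
  have hS2pos : S₂ ∩ (S₁ ∩ Y 0) ∉ I := by
    intro hc
    have hsmall : S₂ ∩ X' 0 ∈ I := hfin _ (hS₂sel 0).finite
    refine hS₂pos (hdown _ (hunion _ hc _ hsmall) _ fun x hx => ?_)
    by_cases hxS : x ∈ S₁ ∩ Y 0
    · exact Or.inl ⟨hx, hxS⟩
    · exact Or.inr ⟨hx, (hX'0mem x).2 hxS⟩
  have hblkinj : ∀ x ∈ S₂ ∩ (S₁ ∩ Y 0), ∀ y ∈ S₂ ∩ (S₁ ∩ Y 0), blk x = blk y → x = y := by
    intro x hx y hy hxy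
    exact hS₂sel (blk x + 1) ⟨hx.1, (hX'smem (blk x) x).2 ⟨hx.2, rfl⟩⟩
      ⟨hy.1, (hX'smem (blk x) y).2 ⟨hy.2, hxy.symm⟩⟩
  -- parity split
  obtain ⟨Z, hZpos, hZmem, hZpar⟩ :
      ∃ Z : Set ℕ, Z ∉ I ∧ (∀ x ∈ Z, x ∈ S₂ ∩ (S₁ ∩ Y 0)) ∧
        (∀ x ∈ Z, ∀ y ∈ Z, blk x % 2 = blk y % 2) := by
    by_cases hE : {x | x ∈ S₂ ∩ (S₁ ∩ Y 0) ∧ blk x % 2 = 0} ∈ I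
    · refine ⟨{x | x ∈ S₂ ∩ (S₁ ∩ Y 0) ∧ blk x % 2 = 1}, fun hO => ?_, fun x hx => hx.1,
        fun x hx y hy => by rw [hx.2, hy.2]⟩
      refine hS2pos (hdown _ (hunion _ hE _ hO) _ fun x hx => ?_)
      by_cases hp : blk x % 2 = 0
      · exact Or.inl ⟨hx, hp⟩
      · exact Or.inr ⟨hx, by omega⟩
    · exact ⟨_, hE, fun x hx => hx.1, fun x hx y hy => by rw [hx.2, hy.2]⟩
  have hZS1 : ∀ x ∈ Z, x ∈ S₁ ∩ Y 0 := fun x hx => (hZmem x hx).2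
  -- the key ordering property
  have hkey : ∀ x ∈ Z, ∀ y ∈ Z, x < y → x < lev y := by
    intro x hx y hy hxy
    have hne : blk x ≠ blk y := fun he => by
      have := hblkinj x (hZmem x hx) y (hZmem y hy) he
      omega
    have hpar := hZpar x hx y hy
    have hgap : blk x + 2 ≤ blk y ∨ blk y + 2 ≤ blk x := by omega
    rcases hgap with hc | hc
    · have h2 : x < M (blk x + 2) := hMbnd (blk x + 1) x (hZS1 x hx) (hblk2 x)
      have h3 : M (blk x + 2) ≤ M (blk y) := hMmono _ _ hc
      have h4 := hblk1 y
      omega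
    · have h2 : y < M (blk y + 2) := hMbnd (blk y + 1) y (hZS1 y hy) (hblk2 y)
      have h3 : M (blk y + 2) ≤ M (blk x) := hMmono _ _ hc
      have h4 := hblk1 x
      have h5 : lev x < x := hlevlt x (hZS1 x hx).2
      omega
  -- enumerate Z increasingly
  have hZinf : (setOf (· ∈ Z)).Infinite := by
    intro hfinZ
    exact hZpos (hfin _ hfinZ)
  have hbmem : ∀ k, Nat.nth (· ∈ Z) k ∈ Z := fun k => Nat.nth_mem_of_infinite hZinf k
  have hbmono : StrictMono (Nat.nth (· ∈ Z)) := Nat.nth_strictMono hZinf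
  have hble : ∀ k, k ≤ Nat.nth (· ∈ Z) k := by
    intro k
    induction k with
    | zero => omega
    | succ j ih =>
      have := hbmono (by omega : j < j + 1)
      omega
  refine ⟨Nat.nth (· ∈ Z), ?_, ?_⟩
  · intro k
    induction k with
    | zero => simpa using hnil
    | succ k ih =>
      simp only [List.range_succ, List.map_append, List.map_cons, List.map_nil]
      have hbY : Nat.nth (· ∈ Z) k ∈ Y (lev (Nat.nth (· ∈ Z) k)) :=
        hlevmem _ (hZS1 _ (hbmem k)).2
      refine ((hYmem _ _).1 hbY).2 _ ih ?_ ?_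
      · rw [List.length_map, List.length_range]
        cases k with
        | zero => omega
        | succ j =>
          have h1 : Nat.nth (· ∈ Z) j < Nat.nth (· ∈ Z) (j+1) := hbmono (by omega : j < j + 1)
          have h2 : Nat.nth (· ∈ Z) j < lev (Nat.nth (· ∈ Z) (j+1)) :=
            hkey _ (hbmem j) _ (hbmem (j+1)) h1
          have h3 := hble j
          omega
      · intro a ha
        simp only [List.mem_map, List.mem_range] at ha
        obtain ⟨j, hj, rfl⟩ := ha
        exact Nat.le_of_lt (hkey _ (hbmem j) _ (hbmem k) (hbmono hj))
  · rw [Nat.range_nth_of_infinite hZinf]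
    exact hZpos
end

section
/- Every weakly Ramsey ideal on ω is locally selective. -/
open Set

theorem weaklyRamsey_locallySelective (I : Set (Set ℕ)) (hI : IsIdealOn I)
    (h : WeaklyRamsey I) : LocallySelective I := by
  obtain ⟨hdown, hunion, hfin, -⟩ := hI
  intro X hX hXI
  obtain ⟨hdisj, hcov⟩ := hX
  have hex : ∀ x : ℕ, ∃ n, x ∈ X n := by
    intro x
    have : x ∈ ⋃ n, X n := hcov ▸ mem_univ x
    simpa using this
  choose pick hpick using hex
  have huniq : ∀ x n, x ∈ X n → n = pick x := by
    intro x n hxn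
    by_contra hne
    exact (hdisj n (pick x) hne).le_bot ⟨hxn, hpick x⟩
  set R : ℕ → ℕ → Prop := fun x y => ∀ n, x ∈ X n → y ∉ X n with hR
  set T : Set (List ℕ) := {s | s.Pairwise R} with hT
  have h0 : ([] : List ℕ) ∈ T := List.Pairwise.nil
  have htree : IsTree T := fun s hs t ht => hs.sublist ht.sublist
  have hram : ∀ s ∈ T, {x : ℕ | s ++ [x] ∈ T}ᶜ ∈ I := by
    intro s hs
    have hU : ∀ t : List ℕ, {x | ∃ y ∈ t, x ∈ X (pick y)} ∈ I := by
      intro t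
      induction t with
      | nil => simpa using hfin ∅ finite_empty
      | cons a t ih =>
        have heq : {x | ∃ y ∈ a :: t, x ∈ X (pick y)}
            = X (pick a) ∪ {x | ∃ y ∈ t, x ∈ X (pick y)} := by
          ext x
          simp [or_and_right, exists_or]
        rw [heq]
        exact hunion _ (hXI _) _ ih
    apply hdown _ (hU s)
    intro x hx
    simp only [mem_compl_iff, mem_setOf_eq] at hx
    by_contra hc
    simp only [mem_setOf_eq, not_exists, not_and] at hc
    apply hx
    refine List.pairwise_append.2 ⟨hs, List.pairwise_singleton _ _, ?_⟩
    intro y hy z hz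
    simp only [List.mem_singleton] at hz
    subst hz
    intro n hyn hzn
    have hn := huniq y n hyn
    subst hn
    exact hc y hy hzn
  obtain ⟨b, hb, hbI⟩ := h T h0 htree hram
  have key : ∀ i j, i < j → R (b i) (b j) := by
    intro i j hij
    have hp : ((List.range (j + 1)).map b).Pairwise R := hb (j + 1)
    rw [List.pairwise_map] at hp
    have := List.pairwise_iff_get.mp hp ⟨i, by simp; omega⟩ ⟨j, by simp⟩
      (by simpa using hij)
    simpa using this
  refine ⟨Set.range b, ?_, hbI⟩
  intro n x hx y hy
  obtain ⟨⟨i, rfl⟩, hxn⟩ := hx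
  obtain ⟨⟨j, rfl⟩, hyn⟩ := hy
  rcases lt_trichotomy i j with hij | rfl | hij
  · exact absurd hyn (key i j hij n hxn)
  · rfl
  · exact absurd hxn (key j i hij n hyn)
end

section
/- The ideal WR is not weakly Ramsey: for the coloring λ on [ω×ω]² given by λ({(i,j),(k,l)}) = 0 if k > i+j and 1 if k ≤ i+j (for (i,j) below (k,l) lexicographically), every set {b : λ({a,b}) = 1} belongs to WR for each a, yet every λ-homogeneous set belongs to WR; hence WR fails the partition characterization of weak Ramseyness. -/
open Set

/-- The coloring `λ`: value `1` (true) unless one point "dominates" the other. -/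
def lam (p q : ℕ × ℕ) : Bool := !(decide (p.1 > q.1 + q.2 ∨ q.1 > p.1 + p.2))


lemma WR_mono {A B : Set (ℕ × ℕ)} (h : A ⊆ B) (hB : B ∈ WR) : A ∈ WR := by
  obtain ⟨C, h1, h2⟩ := hB
  exact ⟨C, h1, h.trans h2⟩

lemma lines_mem_WR (N : ℕ) : {p : ℕ × ℕ | p.1 ≤ N} ∈ WR := by
  classical
  refine ⟨(Finset.range (N+1)).image (fun i => {p : ℕ × ℕ | p.1 = i}), ?_, ?_⟩
  · intro S hS
    simp only [Finset.mem_image] at hS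
    obtain ⟨i, _, rfl⟩ := hS
    exact Or.inl ⟨i, rfl⟩
  · intro p hp
    refine Set.mem_sUnion.2 ⟨{q : ℕ × ℕ | q.1 = p.1}, ?_, rfl⟩
    simp only [Finset.coe_image, Set.mem_image, Finset.mem_coe, Finset.mem_range]
    exact ⟨p.1, Nat.lt_succ_of_le hp, rfl⟩

lemma gen2_mem_WR {H : Set (ℕ × ℕ)} (h : WRgen2 H) : H ∈ WR := by
  refine ⟨{H}, ?_, ?_⟩
  · intro S hS; simp at hS; subst hS; exact Or.inr h
  · intro p hp; exact Set.mem_sUnion.2 ⟨H, by simp, hp⟩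

lemma lam_true_iff (p q : ℕ × ℕ) : lam p q = true ↔ (p.1 ≤ q.1 + q.2 ∧ q.1 ≤ p.1 + p.2) := by
  rw [lam, Bool.not_eq_true', decide_eq_false_iff_not]; omega

lemma lam_false_iff (p q : ℕ × ℕ) : lam p q = false ↔ (p.1 > q.1 + q.2 ∨ q.1 > p.1 + p.2) := by
  rw [lam, Bool.not_eq_false', decide_eq_true_eq]

lemma pairwise_branch {α : Type*} {R : α → α → Prop} {b : ℕ → α}
    (h : ∀ k, ((List.range k).map b).Pairwise R) {m k : ℕ} (hmk : m < k) : R (b m) (b k) := by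
  have := (List.pairwise_map.1 (h (k+1)))
  rw [List.pairwise_iff_get] at this
  have hm : m < (List.range (k+1)).length := by simp; omega
  have hk : k < (List.range (k+1)).length := by simp
  have := this ⟨m, hm⟩ ⟨k, hk⟩ (by simpa using hmk)
  simpa using this

theorem WR_not_weaklyRamsey :
    (∀ a : ℕ × ℕ, {b : ℕ × ℕ | b ≠ a ∧ lam a b = true} ∈ WR) ∧
    (∀ H : Set (ℕ × ℕ), (∃ c, ∀ p ∈ H, ∀ q ∈ H, p ≠ q → lam p q = c) → H ∈ WR) ∧
    ¬ WeaklyRamsey WR := by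
  refine ⟨?_, ?_, ?_⟩
  · intro a
    refine WR_mono ?_ (lines_mem_WR (a.1 + a.2))
    intro b hb
    exact ((lam_true_iff a b).1 hb.2).2
  · rintro H ⟨c, hc⟩
    cases c with
    | false =>
        refine gen2_mem_WR ?_
        intro p hp q hq hpq
        exact (lam_false_iff p q).1 (hc p hp q hq hpq)
    | true =>
        rcases Set.eq_empty_or_nonempty H with rfl | ⟨p0, hp0⟩
        · exact WR_mono (by simp) (lines_mem_WR 0)
        · refine WR_mono ?_ (lines_mem_WR (p0.1 + p0.2))
          intro q hq
          by_cases hqp : q = p0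
          · subst hqp; exact Nat.le_add_right _ _
          · exact ((lam_true_iff p0 q).1 (hc p0 hp0 q hq (Ne.symm hqp))).2
  · intro hWR
    set D : ℕ × ℕ → ℕ × ℕ → Prop := fun p q => q.1 > p.1 + p.2 with hD
    obtain ⟨b, hb1, hb2⟩ := hWR {s | s.Pairwise D} List.Pairwise.nil
      (fun s hs t ht => hs.sublist ht.sublist)
      (by
        intro s hs
        refine WR_mono ?_ (lines_mem_WR ((s.map (fun p => p.1 + p.2)).sum))
        intro x hx
        simp only [Set.mem_compl_iff, Set.mem_setOf_eq] at hx ⊢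
        by_contra hle
        push_neg at hle
        apply hx
        rw [List.pairwise_append]
        refine ⟨hs, List.pairwise_singleton _ _, ?_⟩
        intro p hp q hq
        simp only [List.mem_singleton] at hq; subst hq
        have : p.1 + p.2 ≤ (s.map (fun p => p.1 + p.2)).sum :=
          List.single_le_sum (fun x _ => Nat.zero_le x) _ (List.mem_map_of_mem hp)
        simp only [hD]; omega)
    apply hb2
    refine gen2_mem_WR ?_
    rintro p ⟨m, rfl⟩ q ⟨k, rfl⟩ hpq
    have hmk : m ≠ k := fun h => hpq (by rw [h])
    rcases Nat.lt_or_ge m k with h | h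
    · exact Or.inr (pairwise_branch hb1 h)
    · exact Or.inl (pairwise_branch hb1 (lt_of_le_of_ne h (Ne.symm hmk)))
end

section
/- Let I be an ideal on X and A ∉ I. If the restriction I↾A = {B ∩ A : B ∈ I} is weakly Ramsey (as an ideal on A), then I is weakly Ramsey. -/
open Set

theorem weaklyRamsey_of_restriction {X : Type*} [Countable X]
    (I : Set (Set X)) (hI : IsIdealOn I) (A : Set X) (hA : A ∉ I)
    (h : WeaklyRamsey {S : Set A | Subtype.val '' S ∈ I}) :
    WeaklyRamsey I := by
  intro T hnil htree hram
  set T' : Set (List A) := {s : List A | s.map Subtype.val ∈ T} with hT'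
  have h0 : ([] : List A) ∈ T' := by simpa [hT'] using hnil
  have h1 : IsTree T' := fun s hs t ht => htree _ hs _ (ht.map _)
  have h2 : ∀ s ∈ T', {x : A | s ++ [x] ∈ T'}ᶜ ∈
      {S : Set A | Subtype.val '' S ∈ I} := by
    intro s hs
    have hr := hram (s.map Subtype.val) hs
    refine hI.1 _ hr _ ?_
    rintro x ⟨y, hy, rfl⟩
    simp only [Set.mem_compl_iff, Set.mem_setOf_eq, hT'] at hy ⊢
    simpa using hy
  obtain ⟨b, hb1, hb2⟩ := h T' h0 h1 h2
  refine ⟨fun n => (b n).val, fun k => ?_, fun hc => hb2 ?_⟩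
  · have := hb1 k
    simp only [hT', Set.mem_setOf_eq] at this
    rwa [List.map_map] at this
  · show Subtype.val '' Set.range b ∈ I
    have : Subtype.val '' Set.range b = Set.range (fun n => (b n).val) := by
      ext x; simp [Set.range_comp]
    rw [this]; exact hc
end

section
/- The ideal ED↑ on ω×ω generated by vertical lines and graphs of nondecreasing functions from ω to ω is not weakly Ramsey. -/
open Set

theorem EDup_not_weaklyRamsey : ¬ WeaklyRamsey EDup := by
  intro h
  classical
  -- the tree of finite sequences with strictly increasing first coordinates and
  -- nondecreasing second coordinates
  set R : ℕ × ℕ → ℕ × ℕ → Prop := fun p q => p.1 < q.1 ∧ p.2 ≤ q.2 with hR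
  set T : Set (List (ℕ × ℕ)) := {s | s.Chain' R} with hT
  have hnil : ([] : List (ℕ × ℕ)) ∈ T := by simp [hT, List.Chain']
  have htree : IsTree T := fun s hs t ht => List.IsChain.prefix hs ht
  have hram : ∀ s ∈ T, {x : ℕ × ℕ | s ++ [x] ∈ T}ᶜ ∈ EDup := by
    intro s hs
    rcases s.eq_nil_or_concat with rfl | ⟨l, p, rfl⟩
    on_goal 2 => simp only [List.concat_eq_append] at hs ⊢
    · refine ⟨∅, by simp, ?_⟩
      intro x hx
      exact absurd (by simp [hT, List.Chain']) hx
    · refine ⟨(Finset.range (p.1 + 1)).image (fun i => {q : ℕ × ℕ | q.1 = i}) ∪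
        (Finset.range p.2).image (fun k => {q : ℕ × ℕ | q.2 = k}), ?_, ?_⟩
      · intro S hS
        rcases Finset.mem_union.1 hS with hS | hS
        · obtain ⟨i, _, rfl⟩ := Finset.mem_image.1 hS
          exact Or.inl ⟨i, rfl⟩
        · obtain ⟨k, _, rfl⟩ := Finset.mem_image.1 hS
          exact Or.inr ⟨fun _ => k, monotone_const, rfl⟩
      · intro x hx
        have hx' : ¬ R p x := by
          intro hcon
          apply hx
          show (l ++ [p]) ++ [x] ∈ T
          rw [hT, Set.mem_setOf_eq, List.Chain', List.isChain_append]
          rw [hT, Set.mem_setOf_eq] at hs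
          refine ⟨hs, List.isChain_singleton x, ?_⟩
          intro y hy z hz
          rw [List.getLast?_concat] at hy
          simp only [List.head?_cons, Option.mem_def, Option.some.injEq] at hy hz
          rw [← hy, ← hz]
          exact hcon
        simp only [hR] at hx'
        push_neg at hx'
        rcases Nat.lt_or_ge p.1 x.1 with hlt | hle
        · -- x.2 < p.2
          have h2' : x.2 < p.2 := hx' hlt
          refine ⟨{q : ℕ × ℕ | q.2 = x.2}, ?_, rfl⟩
          exact Finset.mem_coe.2 (Finset.mem_union.2 (Or.inr (Finset.mem_image.2
            ⟨x.2, Finset.mem_range.2 h2', rfl⟩)))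
        · have h1' : x.1 < p.1 + 1 := Nat.lt_succ_of_le hle
          refine ⟨{q : ℕ × ℕ | q.1 = x.1}, ?_, rfl⟩
          exact Finset.mem_coe.2 (Finset.mem_union.2 (Or.inl (Finset.mem_image.2
            ⟨x.1, Finset.mem_range.2 h1', rfl⟩)))
  obtain ⟨b, hb, hpos⟩ := h T hnil htree hram
  -- consecutive steps of the branch
  have key : ∀ k, (b k).1 < (b (k + 1)).1 ∧ (b k).2 ≤ (b (k + 1)).2 := by
    intro k
    have := hb (k + 2)
    rw [hT, Set.mem_setOf_eq, List.Chain', List.isChain_map, List.isChain_range_succ] at this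
    exact this k (by omega)
  have h1 : StrictMono fun k => (b k).1 := strictMono_nat_of_lt_succ fun k => (key k).1
  have h2 : Monotone fun k => (b k).2 := monotone_nat_of_le_succ fun k => (key k).2
  -- build a monotone function covering the branch
  set g : ℕ → ℕ := fun n => Nat.findGreatest (fun k => (b k).1 ≤ n) n with hg
  set f : ℕ → ℕ := fun n => (b (g n)).2 with hf
  have hgmono : Monotone g := by
    intro m n hmn
    exact Nat.findGreatest_mono (fun k hk => le_trans hk hmn) hmn
  have hfmono : Monotone f := fun m n hmn => h2 (hgmono hmn)
  have hgb : ∀ k, g ((b k).1) = k := by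
    intro k
    have hk1 : k ≤ (b k).1 := h1.le_apply
    refine le_antisymm ?_ (Nat.le_findGreatest hk1 le_rfl)
    by_contra hcon
    push_neg at hcon
    have hspec : (b (g ((b k).1))).1 ≤ (b k).1 :=
      Nat.findGreatest_spec (P := fun j => (b j).1 ≤ (b k).1) hk1 le_rfl
    have := h1 hcon
    simp only at this
    omega
  have hmem : Set.range b ∈ EDup := by
    refine ⟨{({q : ℕ × ℕ | q.2 = f q.1} : Set (ℕ × ℕ))}, ?_, ?_⟩
    · intro S hS
      rw [Finset.mem_singleton] at hS
      subst hS
      exact Or.inr ⟨f, hfmono, rfl⟩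
    · rintro q ⟨k, rfl⟩
      refine ⟨{q : ℕ × ℕ | q.2 = f q.1}, by simp, ?_⟩
      show (b k).2 = f (b k).1
      rw [hf]
      simp only
      rw [hgb k]
  exact hpos hmem
end

section
/- The ideal ED↑ on ω×ω generated by vertical lines and graphs of nondecreasing functions is locally selective: every partition of ω×ω into sets belonging to ED↑ admits a selector not in ED↑. -/
open Set

namespace EDupAux

abbrev Pt := ℕ × ℕ

/-- A (strictly decreasing) rainbow chain of length `k`, avoiding colors in `F`,
with all heights `≥ β`. -/
def IsChainN (col : Pt → ℕ) (F : Finset ℕ) (β k : ℕ) (D : ℕ → Pt) : Prop :=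
  (∀ i j, i < j → j < k → (D i).1 < (D j).1 ∧ (D j).2 < (D i).2) ∧
  (∀ i, i < k → β ≤ (D i).2) ∧
  (∀ i, i < k → col (D i) ∉ F) ∧
  (∀ i j, i < j → j < k → col (D i) ≠ col (D j))

lemma isChainN_zero (col : Pt → ℕ) (F : Finset ℕ) (β : ℕ) :
    IsChainN col F β 0 (fun _ => (0, 0)) := by
  refine ⟨?_, ?_, ?_, ?_⟩ <;> intros <;> omega

/-- If `U` contains, for every `k`, a `k × k` grid (with `k` full columns of `k`
consecutive points each), then `U` is not in `ED↑`. -/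
lemma not_EDup_of_slabs (U : Set Pt)
    (h : ∀ k : ℕ, ∃ a b : ℕ, ∀ i j : ℕ, i < k → j < k → ((a + 1 + i, b + j) : Pt) ∈ U) :
    U ∉ EDup := by
  classical
  rintro ⟨C, hgen, hsub⟩
  obtain ⟨a, b, hab⟩ := h (C.card + 1)
  have hline : ∀ i, i < C.card + 1 → ({p : Pt | p.1 = a + 1 + i}) ∈ C := by
    intro i hi
    have hg : ∀ j : ℕ, ∃ S : Set Pt, j < C.card + 1 → S ∈ C ∧ ((a + 1 + i, b + j) : Pt) ∈ S := by
      intro j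
      by_cases hj : j < C.card + 1
      · obtain ⟨S, hS, hpS⟩ := hsub (hab i j hi hj)
        exact ⟨S, fun _ => ⟨hS, hpS⟩⟩
      · exact ⟨∅, fun hc => absurd hc hj⟩
    choose g hgspec using hg
    obtain ⟨j, hj, j', hj', hne, heq⟩ :=
      Finset.exists_ne_map_eq_of_card_lt_of_maps_to
        (s := Finset.range (C.card + 1)) (t := C) (by simp)
        (fun j hj => (hgspec j (Finset.mem_range.1 hj)).1)
    rw [Finset.mem_range] at hj hj'
    have hm := (hgspec j hj).2
    have hm' := (hgspec j' hj').2
    rw [heq] at hm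
    rcases hgen _ (hgspec j' hj').1 with ⟨c, hc⟩ | ⟨f, hf, hfS⟩
    · have hcc : a + 1 + i = c := by
        have h2 := hm; rw [hc] at h2; exact h2
      have : ({p : Pt | p.1 = a + 1 + i} : Set Pt) = g j' := by rw [hc, hcc]
      rw [this]; exact (hgspec j' hj').1
    · exfalso
      rw [hfS] at hm hm'
      simp only [Set.mem_setOf_eq] at hm hm'
      omega
  have hinj : Set.InjOn (fun i => ({p : Pt | p.1 = a + 1 + i} : Set Pt))
      (Finset.range (C.card + 1)) := by
    intro i _ i' _ hii
    have h2 : ({p : Pt | p.1 = a + 1 + i} : Set Pt) = {p : Pt | p.1 = a + 1 + i'} := hii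
    have : (⟨a + 1 + i, 0⟩ : Pt) ∈ ({p : Pt | p.1 = a + 1 + i'} : Set Pt) := by
      rw [← h2]; simp
    simpa using this
  have := Finset.card_le_card_of_injOn _
    (fun i hi => hline i (Finset.mem_range.1 hi)) hinj
  simp at this

lemma biUnion_mem_EDup (X : ℕ → Set Pt) (hX : ∀ n, X n ∈ EDup) (F : Finset ℕ) :
    (⋃ n ∈ F, X n) ∈ EDup := by
  classical
  choose c hc using hX
  refine ⟨F.biUnion c, ?_, ?_⟩
  · intro S hS
    obtain ⟨n, _, hS⟩ := Finset.mem_biUnion.1 hS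
    exact (hc n).1 S hS
  · intro p hp
    simp only [Set.mem_iUnion] at hp
    obtain ⟨n, hnF, hpn⟩ := hp
    obtain ⟨S, hS, hpS⟩ := (hc n).2 hpn
    exact ⟨S, Finset.mem_coe.2 (Finset.mem_biUnion.2 ⟨n, hnF, hS⟩), hpS⟩


/-- Recursively accumulated color sets for a family of chains of length `ℓ`,
where the `s`-th chain avoids all previously used colors and lives above height `β₀ + s`. -/
noncomputable def famF (col : Pt → ℕ) (ℓ : ℕ)
    (hb : ∀ (F : Finset ℕ) (β : ℕ), ∃ D : ℕ → Pt, IsChainN col F β ℓ D)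
    (F₀ : Finset ℕ) (β₀ : ℕ) : ℕ → Finset ℕ
  | 0 => F₀
  | s + 1 =>
      famF col ℓ hb F₀ β₀ s ∪
        (Finset.range ℓ).image (fun i => col ((hb (famF col ℓ hb F₀ β₀ s) (β₀ + s)).choose i))

/-- The key lemma: rainbow decreasing chains of any length, avoiding any finite set
of colors, above any height. -/
lemma chains_exist (X : ℕ → Set Pt) (hX : ∀ n, X n ∈ EDup)
    (col : Pt → ℕ) (hcol : ∀ p : Pt, p ∈ X (col p)) :
    ∀ (F : Finset ℕ) (β k : ℕ), ∃ D : ℕ → Pt, IsChainN col F β k D := by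
  classical
  by_contra hcon
  push_neg at hcon
  obtain ⟨F₁, β₁, k₁, hk₁⟩ := hcon
  have hex : ∃ k, ∃ (F : Finset ℕ) (β : ℕ), ∀ D : ℕ → Pt, ¬ IsChainN col F β k D :=
    ⟨k₁, F₁, β₁, hk₁⟩
  set k' := Nat.find hex with hk'def
  have hspec := Nat.find_spec hex
  have hpos : 0 < k' := by
    rcases Nat.eq_zero_or_pos k' with h0 | h
    · exfalso
      obtain ⟨F, β, hD⟩ := hspec
      rw [← hk'def, h0] at hD
      exact hD _ (isChainN_zero col F β)
    · exact h
  set ℓ := k' - 1 with hℓdef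
  have hkℓ : k' = ℓ + 1 := by omega
  obtain ⟨F₀, β₀, hnoext⟩ := hspec
  rw [← hk'def, hkℓ] at hnoext
  have hb : ∀ (F : Finset ℕ) (β : ℕ), ∃ D : ℕ → Pt, IsChainN col F β ℓ D := by
    have hmin : ¬ ∃ (F : Finset ℕ) (β : ℕ), ∀ D : ℕ → Pt, ¬ IsChainN col F β ℓ D :=
      Nat.find_min hex (by omega)
    push_neg at hmin
    exact hmin
  set G : ℕ → Finset ℕ := famF col ℓ hb F₀ β₀ with hGdef
  set Ch : ℕ → ℕ → Pt := fun s => (hb (G s) (β₀ + s)).choose with hChdef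
  have hCh : ∀ s, IsChainN col (G s) (β₀ + s) ℓ (Ch s) := fun s => (hb (G s) (β₀ + s)).choose_spec
  have hGsucc : ∀ s, G (s + 1) = G s ∪ (Finset.range ℓ).image (fun i => col (Ch s i)) :=
    fun s => rfl
  have hF₀sub : ∀ s, F₀ ⊆ G s := by
    intro s
    induction s with
    | zero => exact Finset.Subset.refl _
    | succ s ih => rw [hGsucc s]; exact ih.trans Finset.subset_union_left
  have hcolmem : ∀ s i, i < ℓ → col (Ch s i) ∈ G (s + 1) := by
    intro s i hi
    rw [hGsucc s]
    exact Finset.mem_union_right _ (Finset.mem_image.2 ⟨i, Finset.mem_range.2 hi, rfl⟩)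
  have hGmono : ∀ s t, s ≤ t → G s ⊆ G t := by
    intro s t hst
    induction t with
    | zero => rw [Nat.le_zero.1 hst]
    | succ t ih =>
      rcases Nat.lt_or_ge s (t + 1) with h | h
      · have := ih (by omega)
        rw [hGsucc t]
        exact this.trans Finset.subset_union_left
      · rw [Nat.le_antisymm hst h]
  -- extension property
  have hE : ∀ s (p : Pt), (∀ i, i < ℓ → (Ch s i).1 < p.1 ∧ p.2 < (Ch s i).2) → β₀ ≤ p.2 →
      col p ∉ F₀ → ∃ i, i < ℓ ∧ col p = col (Ch s i) := by
    intro s p hbr hβ hF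
    by_contra hco
    push_neg at hco
    apply hnoext (fun i => if i < ℓ then Ch s i else p)
    refine ⟨?_, ?_, ?_, ?_⟩
    · intro i j hij hjk
      by_cases hj : j < ℓ
      · have hi : i < ℓ := by omega
        simp only [if_pos hi, if_pos hj]
        exact (hCh s).1 i j hij hj
      · have hjeq : ¬ (j < ℓ) := hj
        have hi : i < ℓ := by omega
        simp only [if_pos hi, if_neg hjeq]
        exact hbr i hi
    · intro i hik
      by_cases hi : i < ℓ
      · simp only [if_pos hi]
        exact le_trans (Nat.le_add_right _ _) ((hCh s).2.1 i hi)
      · simp only [if_neg hi]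
        exact hβ
    · intro i hik
      by_cases hi : i < ℓ
      · simp only [if_pos hi]
        intro hmem
        exact (hCh s).2.2.1 i hi (hF₀sub s hmem)
      · simp only [if_neg hi]
        exact hF
    · intro i j hij hjk
      by_cases hj : j < ℓ
      · have hi : i < ℓ := by omega
        simp only [if_pos hi, if_pos hj]
        exact (hCh s).2.2.2 i j hij hj
      · have hi : i < ℓ := by omega
        simp only [if_pos hi, if_neg hj]
        exact fun hh => hco i hi hh.symm
  -- the slab argument
  have hU₀ : (⋃ n ∈ F₀, X n) ∈ EDup := biUnion_mem_EDup X hX F₀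
  apply not_EDup_of_slabs _ _ hU₀
  intro k
  set a := (Finset.range ℓ).sup (fun i => max (Ch k i).1 (Ch (k + 1) i).1) with hadef
  refine ⟨a, β₀, ?_⟩
  intro i j hik hjk
  set p : Pt := (a + 1 + i, β₀ + j) with hpdef
  have hbr : ∀ r, r = k ∨ r = k + 1 → ∀ i', i' < ℓ → (Ch r i').1 < p.1 ∧ p.2 < (Ch r i').2 := by
    intro r hr i' hi'
    constructor
    · have hsup : max (Ch k i').1 (Ch (k + 1) i').1 ≤ a :=
        Finset.le_sup (f := fun i => max (Ch k i).1 (Ch (k + 1) i).1) (Finset.mem_range.2 hi')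
      have h1 : (Ch r i').1 ≤ a := by
        rcases hr with h | h <;> subst h <;> omega
      simp only [hpdef]
      omega
    · have h2 : β₀ + r ≤ (Ch r i').2 := (hCh r).2.1 i' hi'
      have h3 : β₀ + k ≤ β₀ + r := by rcases hr with h | h <;> omega
      simp only [hpdef]
      omega
  by_cases hpF : col p ∈ F₀
  · exact Set.mem_biUnion hpF (hcol p)
  · exfalso
    obtain ⟨i₁, hi₁, he₁⟩ := hE k p (hbr k (Or.inl rfl)) (by simp [hpdef]) hpF
    obtain ⟨i₂, hi₂, he₂⟩ := hE (k + 1) p (hbr (k + 1) (Or.inr rfl)) (by simp [hpdef]) hpF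
    have hin : col (Ch k i₁) ∈ G (k + 1) := hcolmem k i₁ hi₁
    have hout : col (Ch (k + 1) i₂) ∉ G (k + 1) := (hCh (k + 1)).2.2.1 i₂ hi₂
    rw [← he₁] at hin
    rw [← he₂] at hout
    exact hout hin

/-- Recursively accumulated color sets for the selector: at stage `k` we pick a
rainbow chain of length `k + 1` avoiding all previously used colors. -/
noncomputable def selFam (col : Pt → ℕ)
    (hch : ∀ (F : Finset ℕ) (β k : ℕ), ∃ D : ℕ → Pt, IsChainN col F β k D) : ℕ → Finset ℕ
  | 0 => ∅
  | k + 1 =>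
      selFam col hch k ∪
        (Finset.range (k + 1)).image (fun i => col ((hch (selFam col hch k) 0 (k + 1)).choose i))

end EDupAux

theorem EDup_locallySelective : LocallySelective EDup := by
  classical
  intro X hpart hX
  obtain ⟨hdisj, hcover⟩ := hpart
  have hexn : ∀ p : EDupAux.Pt, ∃ n, p ∈ X n := by
    intro p
    have : p ∈ ⋃ n, X n := by rw [hcover]; exact Set.mem_univ p
    simpa using this
  choose col hcol using hexn
  have hcolu : ∀ (p : EDupAux.Pt) (n : ℕ), p ∈ X n → col p = n := by
    intro p n hp
    by_contra hne
    exact Set.disjoint_left.1 (hdisj (col p) n hne) (hcol p) hp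
  have hch := EDupAux.chains_exist X hX col hcol
  set U : ℕ → Finset ℕ := EDupAux.selFam col hch with hUdef
  set D : ℕ → ℕ → EDupAux.Pt := fun k => (hch (U k) 0 (k + 1)).choose with hDdef
  have hD : ∀ k, EDupAux.IsChainN col (U k) 0 (k + 1) (D k) :=
    fun k => (hch (U k) 0 (k + 1)).choose_spec
  have hUsucc : ∀ k, U (k + 1) = U k ∪ (Finset.range (k + 1)).image (fun i => col (D k i)) :=
    fun k => rfl
  have hcolmem : ∀ k i, i < k + 1 → col (D k i) ∈ U (k + 1) := by
    intro k i hi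
    rw [hUsucc k]
    exact Finset.mem_union_right _ (Finset.mem_image.2 ⟨i, Finset.mem_range.2 hi, rfl⟩)
  have hUmono : ∀ s t, s ≤ t → U s ⊆ U t := by
    intro s t hst
    induction t with
    | zero => rw [Nat.le_zero.1 hst]
    | succ t ih =>
      rcases Nat.lt_or_ge s (t + 1) with h | h
      · have := ih (by omega)
        rw [hUsucc t]
        exact this.trans Finset.subset_union_left
      · rw [Nat.le_antisymm hst h]
  refine ⟨{p | ∃ k i, i < k + 1 ∧ D k i = p}, ?_, ?_⟩
  · -- selector
    intro n p hp q hq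
    obtain ⟨⟨k, i, hik, hDp⟩, hpX⟩ := hp
    obtain ⟨⟨k', i', hik', hDq⟩, hqX⟩ := hq
    have hcp : col (D k i) = n := by rw [hDp]; exact hcolu p n hpX
    have hcq : col (D k' i') = n := by rw [hDq]; exact hcolu q n hqX
    have hkey : ∀ a b ia ib, a < b → ia < a + 1 → ib < b + 1 →
        col (D a ia) ≠ col (D b ib) := by
      intro a b ia ib hab hia hib heq
      have h1 : col (D a ia) ∈ U b := hUmono (a + 1) b (by omega) (hcolmem a ia hia)
      have h2 : col (D b ib) ∉ U b := (hD b).2.2.1 ib hib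
      rw [heq] at h1
      exact h2 h1
    rcases Nat.lt_trichotomy k k' with h | h | h
    · exact absurd (hcp.trans hcq.symm) (hkey k k' i i' h hik hik')
    · subst h
      rcases Nat.lt_trichotomy i i' with h | h | h
      · exact absurd (hcp.trans hcq.symm) ((hD k).2.2.2 i i' h hik')
      · subst h; rw [← hDp, ← hDq]
      · exact absurd (hcq.trans hcp.symm) ((hD k).2.2.2 i' i h hik)
    · exact absurd (hcq.trans hcp.symm) (hkey k' k i' i h hik' hik)
  · -- positivity
    rintro ⟨C, hgen, hsub⟩
    set m := C.card with hmdef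
    have hmem : ∀ i, i < m + 1 → (D m i) ∈ ⋃₀ (↑C : Set (Set EDupAux.Pt)) := by
      intro i hi
      exact hsub ⟨m, i, hi, rfl⟩
    have hg : ∀ i : ℕ, ∃ S : Set EDupAux.Pt, i < m + 1 → S ∈ C ∧ D m i ∈ S := by
      intro i
      by_cases hi : i < m + 1
      · obtain ⟨S, hS, hpS⟩ := hmem i hi
        exact ⟨S, fun _ => ⟨hS, hpS⟩⟩
      · exact ⟨∅, fun hc => absurd hc hi⟩
    choose g hgspec using hg
    obtain ⟨i, hi, i', hi', hne, heq⟩ :=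
      Finset.exists_ne_map_eq_of_card_lt_of_maps_to
        (s := Finset.range (m + 1)) (t := C) (by simp [hmdef])
        (fun j hj => (hgspec j (Finset.mem_range.1 hj)).1)
    rw [Finset.mem_range] at hi hi'
    -- wlog i < i'
    have hmain : ∀ a b, a < b → b < m + 1 → g a = g b → False := by
      intro a b hab hbm heqab
      have hma := (hgspec a (by omega)).2
      have hmb := (hgspec b hbm).2
      rw [heqab] at hma
      have hchain := (hD m).1 a b hab hbm
      rcases hgen _ (hgspec b hbm).1 with ⟨c, hc⟩ | ⟨f, hf, hfS⟩
      · rw [hc] at hma hmb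
        simp only [Set.mem_setOf_eq] at hma hmb
        omega
      · rw [hfS] at hma hmb
        simp only [Set.mem_setOf_eq] at hma hmb
        have := hf (le_of_lt hchain.1)
        omega
    rcases Nat.lt_trichotomy i i' with h | h | h
    · exact hmain i i' h hi' heq
    · exact hne h
    · exact hmain i' i h hi heq.symm
end

section
/- There exists an ideal on ω isomorphic to ED↑ which is not Mon, i.e., there is a bijection π: ω → ω×ω and a sequence of reals (x_n) such that for every M ⊆ ω with (x_n)_{n∈M} monotone, π[M] ∈ ED↑. -/
open Set

namespace EDupAux

/-- Enumeration rank: shell `max i j`; within a shell, first the right side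
(`j ≤ i`) in decreasing `j`, then the top side in increasing `i`. -/
def Tfun (p : ℕ × ℕ) : ℕ :=
  if p.2 ≤ p.1 then p.1 * p.1 + p.1 - p.2 else p.2 * p.2 + p.2 + 1 + p.1

def Ufun (n : ℕ) : ℕ × ℕ :=
  if n - n.sqrt * n.sqrt ≤ n.sqrt then (n.sqrt, n.sqrt - (n - n.sqrt * n.sqrt))
  else (n - n.sqrt * n.sqrt - n.sqrt - 1, n.sqrt)

lemma Tfun_mk (i j : ℕ) :
    Tfun (i, j) = if j ≤ i then i * i + i - j else j * j + j + 1 + i := rfl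

lemma sqrt_eq_shell {s n : ℕ} (h1 : s * s ≤ n) (h2 : n < (s + 1) * (s + 1)) :
    n.sqrt = s := by
  have a := Nat.le_sqrt.mpr h1
  have b := Nat.sqrt_lt.mpr h2
  omega

lemma Ufun_Tfun (p : ℕ × ℕ) : Ufun (Tfun p) = p := by
  rcases p with ⟨i, j⟩
  by_cases h : j ≤ i
  · have ht : Tfun (i, j) = i * i + i - j := by rw [Tfun_mk, if_pos h]
    rw [ht]
    have hs : (i * i + i - j).sqrt = i := by
      apply sqrt_eq_shell
      · omega
      · have : (i + 1) * (i + 1) = i * i + 2 * i + 1 := by ring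
        omega
    unfold Ufun
    rw [hs]
    have h1 : i * i + i - j - i * i = i - j := by omega
    rw [h1, if_pos (Nat.sub_le i j)]
    have h2 : i - (i - j) = j := by omega
    rw [h2]
  · push_neg at h
    have ht : Tfun (i, j) = j * j + j + 1 + i := by rw [Tfun_mk, if_neg (by omega)]
    rw [ht]
    have hs : (j * j + j + 1 + i).sqrt = j := by
      apply sqrt_eq_shell
      · omega
      · have : (j + 1) * (j + 1) = j * j + 2 * j + 1 := by ring
        omega
    unfold Ufun
    rw [hs]
    have h1 : j * j + j + 1 + i - j * j = j + 1 + i := by omega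
    rw [h1, if_neg (by omega)]
    have h2 : j + 1 + i - j - 1 = i := by omega
    rw [h2]

lemma Tfun_Ufun (n : ℕ) : Tfun (Ufun n) = n := by
  unfold Ufun
  set s := n.sqrt with hsdef
  have hs : s * s ≤ n := Nat.sqrt_le n
  have hlt : n < (s + 1) * (s + 1) := Nat.lt_succ_sqrt n
  have hexp : (s + 1) * (s + 1) = s * s + 2 * s + 1 := by ring
  by_cases h : n - s * s ≤ s
  · rw [if_pos h, Tfun_mk, if_pos (by omega : s - (n - s * s) ≤ s)]
    omega
  · rw [if_neg h, Tfun_mk, if_neg (by omega : ¬ s ≤ n - s * s - s - 1)]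
    omega

/-- The bijection `ℕ ≃ ℕ × ℕ`. -/
def eqv : ℕ ≃ ℕ × ℕ := ⟨Ufun, Tfun, Tfun_Ufun, Ufun_Tfun⟩

/-- The values: primarily ordered by `min i j`; within the level set
(the "L" with corner `(m,m)`), the row part increases towards `m + 1/2`,
the column part decreases towards `m + 1/2` from above. -/
noncomputable def xval (p : ℕ × ℕ) : ℝ :=
  if p.1 ≤ p.2 then (p.1 : ℝ) + 1 / 2 + 1 / (4 * ((p.2 : ℝ) - p.1 + 1))
  else (p.2 : ℝ) + 1 / 2 - 1 / (2 * ((p.1 : ℝ) - p.2))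

lemma xval_mk (i j : ℕ) :
    xval (i, j) = if i ≤ j then (i : ℝ) + 1 / 2 + 1 / (4 * ((j : ℝ) - i + 1))
      else (j : ℝ) + 1 / 2 - 1 / (2 * ((i : ℝ) - j)) := rfl

lemma xval_ge (p : ℕ × ℕ) : ((min p.1 p.2 : ℕ) : ℝ) ≤ xval p := by
  rcases p with ⟨i, j⟩
  rw [xval_mk]
  show ((min i j : ℕ) : ℝ) ≤ _
  by_cases h : i ≤ j
  · rw [if_pos h, min_eq_left h]
    have hij : (i : ℝ) ≤ j := by exact_mod_cast h
    have hd : (0 : ℝ) < 4 * ((j : ℝ) - i + 1) := by linarith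
    have := one_div_pos.mpr hd
    linarith
  · push_neg at h
    rw [if_neg (by omega), min_eq_right (le_of_lt h)]
    have hij : (j : ℝ) + 1 ≤ i := by exact_mod_cast h
    have h2 : (2 : ℝ) ≤ 2 * ((i : ℝ) - j) := by linarith
    have := one_div_le_one_div_of_le (by norm_num : (0:ℝ) < 2) h2
    linarith

lemma xval_le (p : ℕ × ℕ) : xval p ≤ ((min p.1 p.2 : ℕ) : ℝ) + 3 / 4 := by
  rcases p with ⟨i, j⟩
  rw [xval_mk]
  show _ ≤ ((min i j : ℕ) : ℝ) + 3 / 4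
  by_cases h : i ≤ j
  · rw [if_pos h, min_eq_left h]
    have hij : (i : ℝ) ≤ j := by exact_mod_cast h
    have h2 : (4 : ℝ) ≤ 4 * ((j : ℝ) - i + 1) := by linarith
    have := one_div_le_one_div_of_le (by norm_num : (0:ℝ) < 4) h2
    linarith
  · push_neg at h
    rw [if_neg (by omega), min_eq_right (le_of_lt h)]
    have hij : (j : ℝ) + 1 ≤ i := by exact_mod_cast h
    have hd : (0 : ℝ) < 2 * ((i : ℝ) - j) := by linarith
    have := one_div_pos.mpr hd
    linarith

lemma xval_lt_of_min_lt {p q : ℕ × ℕ} (h : min p.1 p.2 < min q.1 q.2) :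
    xval p < xval q := by
  have h1 := xval_le p
  have h2 := xval_ge q
  have h3 : ((min p.1 p.2 : ℕ) : ℝ) + 1 ≤ ((min q.1 q.2 : ℕ) : ℝ) := by exact_mod_cast h
  linarith

lemma xval_col_anti {i j j' : ℕ} (hij : i ≤ j) (hjj : j < j') :
    xval (i, j') < xval (i, j) := by
  rw [xval_mk, xval_mk, if_pos hij, if_pos (by omega : i ≤ j')]
  have hij' : (i : ℝ) ≤ j := by exact_mod_cast hij
  have hjj' : (j : ℝ) < j' := by exact_mod_cast hjj
  have hd : (0 : ℝ) < 4 * ((j : ℝ) - i + 1) := by linarith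
  have := one_div_lt_one_div_of_lt hd (by linarith : 4 * ((j:ℝ) - i + 1) < 4 * ((j':ℝ) - i + 1))
  linarith

lemma xval_row_mono {i i' j : ℕ} (h : j < i) (h' : i < i') :
    xval (i, j) < xval (i', j) := by
  rw [xval_mk, xval_mk, if_neg (by omega), if_neg (by omega)]
  have h1 : (j : ℝ) < i := by exact_mod_cast h
  have h2 : (i : ℝ) < i' := by exact_mod_cast h'
  have hd : (0 : ℝ) < 2 * ((i : ℝ) - j) := by linarith
  have := one_div_lt_one_div_of_lt hd (by linarith : 2 * ((i:ℝ) - j) < 2 * ((i':ℝ) - j))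
  linarith

lemma xval_row_lt_col {z m y : ℕ} (h : m < z) (h' : m ≤ y) :
    xval (z, m) < xval (m, y) := by
  rw [xval_mk, xval_mk, if_neg (by omega), if_pos h']
  have h1 : (m : ℝ) + 1 ≤ z := by exact_mod_cast h
  have h2 : (m : ℝ) ≤ y := by exact_mod_cast h'
  have hd1 : (0 : ℝ) < 2 * ((z : ℝ) - m) := by linarith
  have hd2 : (0 : ℝ) < 4 * ((y : ℝ) - m + 1) := by linarith
  have := one_div_pos.mpr hd1
  have := one_div_pos.mpr hd2
  linarith

lemma Tfun_lt_of_max_lt {p q : ℕ × ℕ} (h : max p.1 p.2 < max q.1 q.2) :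
    Tfun p < Tfun q := by
  rcases p with ⟨i, j⟩
  rcases q with ⟨i', j'⟩
  simp only at h
  have hp : Tfun (i, j) ≤ max i j * max i j + 2 * max i j := by
    rw [Tfun_mk]
    split_ifs with h1
    · rw [max_eq_left h1]; omega
    · push_neg at h1
      rw [max_eq_right (le_of_lt h1)]; omega
  have hq : max i' j' * max i' j' ≤ Tfun (i', j') := by
    rw [Tfun_mk]
    split_ifs with h1
    · rw [max_eq_left h1]; omega
    · push_neg at h1
      rw [max_eq_right (le_of_lt h1)]; omega
  have hab : max i j + 1 ≤ max i' j' := h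
  have hsq : (max i j + 1) * (max i j + 1) ≤ max i' j' * max i' j' :=
    Nat.mul_le_mul hab hab
  have hexp : (max i j + 1) * (max i j + 1) = max i j * max i j + 2 * max i j + 1 := by
    ring
  omega

/-- Extension of a single-valued monotone relation to a total monotone function. -/
lemma exists_monotone_ext (R : ℕ → ℕ → Prop)
    (huniq : ∀ i y y', R i y → R i y' → y = y')
    (hmono : ∀ i y i' y', R i y → R i' y' → i < i' → y ≤ y') :
    ∃ f : ℕ → ℕ, Monotone f ∧ ∀ i y, R i y → f i = y := by
  classical
  let g : ℕ → ℕ := fun n =>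
    Nat.rec (if h : ∃ y, R 0 y then h.choose else 0)
      (fun i ih => if h : ∃ y, R (i + 1) y then h.choose else ih) n
  have g0 : g 0 = if h : ∃ y, R 0 y then h.choose else 0 := rfl
  have gs : ∀ i, g (i + 1) = if h : ∃ y, R (i + 1) y then h.choose else g i :=
    fun i => rfl
  have inv : ∀ n, g n = 0 ∨ ∃ m, m ≤ n ∧ R m (g n) := by
    intro n
    induction n with
    | zero =>
      rw [g0]
      split_ifs with h
      · exact Or.inr ⟨0, le_refl 0, h.choose_spec⟩
      · exact Or.inl rfl
    | succ i ih =>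
      rw [gs]
      split_ifs with h
      · exact Or.inr ⟨i + 1, le_refl _, h.choose_spec⟩
      · rcases ih with h0 | ⟨m, hm, hR⟩
        · exact Or.inl h0
        · exact Or.inr ⟨m, Nat.le_succ_of_le hm, hR⟩
  have gcorrect : ∀ i y, R i y → g i = y := by
    intro i y hy
    cases i with
    | zero =>
      rw [g0, dif_pos ⟨y, hy⟩]
      exact huniq 0 _ _ (Exists.choose_spec _) hy
    | succ n =>
      rw [gs, dif_pos ⟨y, hy⟩]
      exact huniq (n + 1) _ _ (Exists.choose_spec _) hy
  refine ⟨g, ?_, gcorrect⟩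
  apply monotone_nat_of_le_succ
  intro n
  rw [gs]
  split_ifs with h
  · rcases inv n with h0 | ⟨m, hm, hR⟩
    · rw [h0]; exact Nat.zero_le _
    · exact hmono m _ (n + 1) _ hR h.choose_spec (Nat.lt_succ_of_le hm)
  · exact le_refl _

end EDupAux

theorem EDup_iso_not_Mon :
    ∃ (π : ℕ ≃ (ℕ × ℕ)) (x : ℕ → ℝ), ∀ M : Set ℕ,
      (MonotoneOn x M ∨ AntitoneOn x M) → ⇑π '' M ∈ EDup := by
  classical
  open EDupAux in
  refine ⟨eqv, fun n => xval (eqv n), ?_⟩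
  intro M hM
  rcases hM with hmono | hanti
  · -- monotone case: cover by two nondecreasing graphs
    set A : Set (ℕ × ℕ) := ⇑eqv '' M with hA
    have chain : ∀ p ∈ A, ∀ q ∈ A, Tfun p < Tfun q → xval p ≤ xval q := by
      rintro p ⟨a, ha, rfl⟩ q ⟨b, hb, rfl⟩ hlt
      have ea : Tfun (eqv a) = a := Tfun_Ufun a
      have eb : Tfun (eqv b) = b := Tfun_Ufun b
      rw [ea, eb] at hlt
      exact hmono ha hb (le_of_lt hlt)
    -- at most one "column" point per column
    have colu : ∀ i y y', (i, y) ∈ A → (i, y') ∈ A → i ≤ y → i ≤ y' → y < y' → False := by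
      intro i y y' h1 h2 hy hy' hlt
      have hT : Tfun (i, y) < Tfun (i, y') := by
        rw [Tfun_mk, Tfun_mk]
        split_ifs with a1 a2 a2
        · omega
        · have h3 : (i + 1) * (i + 1) ≤ y' * y' := Nat.mul_le_mul (by omega) (by omega)
          have h4 : (i + 1) * (i + 1) = i * i + 2 * i + 1 := by ring
          omega
        · omega
        · have h3 : y * y ≤ y' * y' := Nat.mul_le_mul (le_of_lt hlt) (le_of_lt hlt)
          omega
      have hx : xval (i, y') < xval (i, y) := xval_col_anti hy hlt
      exact absurd (chain _ h1 _ h2 hT) (not_le.mpr hx)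
    -- at most one "row" point per column below diagonal
    have rowu : ∀ z m m', (z, m) ∈ A → (z, m') ∈ A → m < z → m' < z → m < m' → False := by
      intro z m m' h1 h2 hm hm' hlt
      have hT : Tfun (z, m') < Tfun (z, m) := by
        rw [Tfun_mk, Tfun_mk, if_pos (le_of_lt hm'), if_pos (le_of_lt hm)]
        omega
      have hx : xval (z, m) < xval (z, m') := by
        apply xval_lt_of_min_lt
        show min z m < min z m'
        rw [min_eq_right (le_of_lt hm), min_eq_right (le_of_lt hm')]
        exact hlt
      exact absurd (chain _ h2 _ h1 hT) (not_le.mpr hx)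
    -- column points have nondecreasing heights
    have colm : ∀ m y m' y', (m, y) ∈ A → (m', y') ∈ A → m ≤ y → m' ≤ y' → m < m' → y ≤ y' := by
      intro m y m' y' h1 h2 hy hy' hlt
      by_contra hcon
      push_neg at hcon
      have hx : xval (m, y) < xval (m', y') := by
        apply xval_lt_of_min_lt
        show min m y < min m' y'
        rw [min_eq_left hy, min_eq_left hy']
        exact hlt
      have hT : Tfun (m', y') < Tfun (m, y) := by
        apply Tfun_lt_of_max_lt
        show max m' y' < max m y
        rw [max_eq_right hy', max_eq_right hy]
        exact hcon
      exact absurd (chain _ h2 _ h1 hT) (not_le.mpr hx)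
    -- row points in higher levels sit strictly further right
    have rowm : ∀ z m z' m', (z, m) ∈ A → (z', m') ∈ A → m < z → m' < z' → m < m' → z < z' := by
      intro z m z' m' h1 h2 hm hm' hlt
      by_contra hcon
      push_neg at hcon
      have hx : xval (z, m) < xval (z', m') := by
        apply xval_lt_of_min_lt
        show min z m < min z' m'
        rw [min_eq_right (le_of_lt hm), min_eq_right (le_of_lt hm')]
        exact hlt
      have hT : Tfun (z', m') < Tfun (z, m) := by
        rcases lt_or_eq_of_le hcon with hzz | hzz
        · apply Tfun_lt_of_max_lt
          show max z' m' < max z m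
          rw [max_eq_left (le_of_lt hm'), max_eq_left (le_of_lt hm)]
          exact hzz
        · subst hzz
          rw [Tfun_mk, Tfun_mk, if_pos (le_of_lt hm'), if_pos (le_of_lt hm)]
          omega
      exact absurd (chain _ h2 _ h1 hT) (not_le.mpr hx)
    obtain ⟨fc, hfc_mono, hfc⟩ :=
      exists_monotone_ext (fun i y => (i, y) ∈ A ∧ i ≤ y)
        (by
          intro i y y' h h'
          rcases lt_trichotomy y y' with hl | he | hl
          · exact absurd (colu i y y' h.1 h'.1 h.2 h'.2 hl) (fun f => f)
          · exact he
          · exact absurd (colu i y' y h'.1 h.1 h'.2 h.2 hl) (fun f => f))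
        (by
          intro i y i' y' h h' hlt
          exact colm i y i' y' h.1 h'.1 h.2 h'.2 hlt)
    obtain ⟨fr, hfr_mono, hfr⟩ :=
      exists_monotone_ext (fun z m => (z, m) ∈ A ∧ m < z)
        (by
          intro z m m' h h'
          rcases lt_trichotomy m m' with hl | he | hl
          · exact absurd (rowu z m m' h.1 h'.1 h.2 h'.2 hl) (fun f => f)
          · exact he
          · exact absurd (rowu z m' m h'.1 h.1 h'.2 h.2 hl) (fun f => f))
        (by
          intro z m z' m' h h' hlt
          by_contra hc
          push_neg at hc
          exact absurd (rowm z' m' z m h'.1 h.1 h'.2 h.2 hc) (by omega))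
    refine ⟨{ {p : ℕ × ℕ | p.2 = fc p.1}, {p : ℕ × ℕ | p.2 = fr p.1} }, ?_, ?_⟩
    · intro S hS
      rcases Finset.mem_insert.mp hS with rfl | hS
      · exact Or.inr ⟨fc, hfc_mono, rfl⟩
      · rw [Finset.mem_singleton] at hS
        subst hS
        exact Or.inr ⟨fr, hfr_mono, rfl⟩
    · rintro ⟨i, j⟩ hp
      by_cases hc : i ≤ j
      · refine Set.mem_sUnion.mpr ⟨{p : ℕ × ℕ | p.2 = fc p.1}, ?_, ?_⟩
        · exact Finset.mem_coe.mpr (Finset.mem_insert_self _ _)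
        · exact (hfc i j ⟨hp, hc⟩).symm
      · push_neg at hc
        refine Set.mem_sUnion.mpr ⟨{p : ℕ × ℕ | p.2 = fr p.1}, ?_, ?_⟩
        · exact Finset.mem_coe.mpr
            (Finset.mem_insert_of_mem (Finset.mem_singleton_self _))
        · exact (hfr i j ⟨hp, hc⟩).symm
  · -- antitone case: min levels are bounded, so finitely many lines and rows suffice
    by_cases hne : M.Nonempty
    · set n0 := sInf M with hn0def
      have hn0 : n0 ∈ M := Nat.sInf_mem hne
      set K := min (eqv n0).1 (eqv n0).2 with hK
      have hbound : ∀ p ∈ ⇑eqv '' M, min p.1 p.2 ≤ K := by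
        rintro p ⟨b, hb, rfl⟩
        have hx : xval (eqv b) ≤ xval (eqv n0) := hanti hn0 hb (Nat.sInf_le hb)
        by_contra hcon
        push_neg at hcon
        exact absurd hx (not_le.mpr (xval_lt_of_min_lt hcon))
      refine ⟨((Finset.range (K + 1)).image fun m => {p : ℕ × ℕ | p.1 = m}) ∪
        ((Finset.range (K + 1)).image fun m => {p : ℕ × ℕ | p.2 = m}), ?_, ?_⟩
      · intro S hS
        rcases Finset.mem_union.mp hS with h | h
        · obtain ⟨m, _, rfl⟩ := Finset.mem_image.mp h
          exact Or.inl ⟨m, rfl⟩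
        · obtain ⟨m, _, rfl⟩ := Finset.mem_image.mp h
          exact Or.inr ⟨fun _ => m, monotone_const, rfl⟩
      · rintro ⟨i, j⟩ hp
        have hm := hbound _ hp
        by_cases hc : i ≤ j
        · have h1 : i ≤ K := by
            have : min i j = i := min_eq_left hc
            simp only at hm
            omega
          refine Set.mem_sUnion.mpr ⟨{p : ℕ × ℕ | p.1 = i}, ?_, rfl⟩
          apply Finset.mem_coe.mpr
          apply Finset.mem_union_left
          exact Finset.mem_image.mpr ⟨i, Finset.mem_range.mpr (by omega), rfl⟩
        · push_neg at hc
          have h1 : j ≤ K := by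
            have hm2 : min i j ≤ K := hm
            omega
          refine Set.mem_sUnion.mpr ⟨{p : ℕ × ℕ | p.2 = j}, ?_, rfl⟩
          apply Finset.mem_coe.mpr
          apply Finset.mem_union_right
          exact Finset.mem_image.mpr ⟨j, Finset.mem_range.mpr (by omega), rfl⟩
    · rw [Set.not_nonempty_iff_eq_empty] at hne
      subst hne
      refine ⟨∅, ?_, ?_⟩
      · intro S hS
        exact absurd hS (Finset.notMem_empty S)
      · simp
end
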